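/- arXiv:2503.02336 — 8 statements merged into one kernel-verified Lean document; each statement's English description precedes it below -/
import Mathlib

section
/- Let S ⊆ ℝ² be a finite set and p = (a,b) ∈ S. Then p is an extreme point of the convex hull of S if and only if its dual line appears on the upper or lower envelope of the dual lines of S: there exists x ∈ ℝ such that a·x − b > c·x − d for every (c,d) ∈ S with (c,d) ≠ p, or there exists x ∈ ℝ such that a·x − b < c·x − d for every (c,d) ∈ S with (c,d) ≠ p. -/
/-!
A point `p` is outside the convex hull of the finite set `T = S \ {p}` iff some linear functional
`(c, d) ↦ α c + β d` is strictly larger at `p` than on `T` (Hahn–Banach one way, the half-plane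
containing the hull the other). For finite `T` these coefficient vectors `(α, β)` form an open set,
so one of them has `β ≠ 0`. Dividing by `|β|` turns the separation into a comparison of dual lines
at `x = ∓α / β`: the dual line of `p` lies strictly above all others when `β < 0`, strictly below
them when `β > 0`.
-/

open Set

theorem Set.Finite.notMem_convexHull_iff_exists_lt {E : Type*} [TopologicalSpace E]
    [AddCommGroup E] [Module ℝ E] [IsTopologicalAddGroup E] [ContinuousSMul ℝ E]
    [LocallyConvexSpace ℝ E] [T2Space E] {T : Set E} (hT : T.Finite) (p : E) :
    p ∉ convexHull ℝ T ↔ ∃ f : StrongDual ℝ E, ∀ q ∈ T, f q < f p := by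
  constructor
  · intro hp
    obtain ⟨f, u, hfT, hfp⟩ :=
      geometric_hahn_banach_closed_point (convex_convexHull ℝ T)
        (hT.isClosed_convexHull (𝕜 := ℝ)) hp
    exact ⟨f, fun q hq => (hfT q (subset_convexHull ℝ T hq)).trans hfp⟩
  · rintro ⟨f, hf⟩ hp
    have hsub : convexHull ℝ T ⊆ {z | f z < f p} :=
      convexHull_min hf (convex_halfSpace_lt f.isLinear _)
    exact lt_irrefl (f p) (hsub hp)

theorem IsOpen.exists_snd_ne_zero {X : Type*} [TopologicalSpace X] {U : Set (X × ℝ)}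
    (hU : IsOpen U) (hne : U.Nonempty) : ∃ v ∈ U, v.2 ≠ 0 :=
  ((dense_compl_singleton (0 : ℝ)).preimage isOpenMap_snd).inter_open_nonempty U hU hne

theorem Set.Finite.isOpen_setOf_forall_lt {T : Set (ℝ × ℝ)} (hT : T.Finite) (p : ℝ × ℝ) :
    IsOpen {v : ℝ × ℝ | ∀ q ∈ T, v.1 * q.1 + v.2 * q.2 < v.1 * p.1 + v.2 * p.2} := by
  simp only [ofPred_forall]
  exact hT.isOpen_biInter fun q _ => isOpen_lt (by fun_prop) (by fun_prop)

theorem Set.Finite.notMem_convexHull_iff_exists_snd_ne_zero {T : Set (ℝ × ℝ)} (hT : T.Finite)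
    (p : ℝ × ℝ) :
    p ∉ convexHull ℝ T ↔
      ∃ v : ℝ × ℝ, v.2 ≠ 0 ∧ ∀ q ∈ T, v.1 * q.1 + v.2 * q.2 < v.1 * p.1 + v.2 * p.2 := by
  rw [hT.notMem_convexHull_iff_exists_lt]
  constructor
  · rintro ⟨f, hf⟩
    have hcoord (z : ℝ × ℝ) : f z = f (1, 0) * z.1 + f (0, 1) * z.2 := by
      have hz : z = z.1 • ((1 : ℝ), (0 : ℝ)) + z.2 • ((0 : ℝ), (1 : ℝ)) := by ext <;> simp
      conv_lhs => rw [hz, map_add, map_smul, map_smul, smul_eq_mul, smul_eq_mul]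
      ring
    obtain ⟨v, hv, hv2⟩ := (hT.isOpen_setOf_forall_lt p).exists_snd_ne_zero
      ⟨(f (1, 0), f (0, 1)), fun q hq => by simpa only [← hcoord] using hf q hq⟩
    exact ⟨v, hv2, hv⟩
  · rintro ⟨v, -, hv⟩
    refine ⟨v.1 • ContinuousLinearMap.fst ℝ ℝ ℝ + v.2 • ContinuousLinearMap.snd ℝ ℝ ℝ, ?_⟩
    simpa using hv

theorem exists_snd_ne_zero_forall_lt_iff_dual_envelope (T : Set (ℝ × ℝ)) (a b : ℝ) :
    (∃ v : ℝ × ℝ, v.2 ≠ 0 ∧ ∀ q ∈ T, v.1 * q.1 + v.2 * q.2 < v.1 * a + v.2 * b) ↔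
      (∃ x : ℝ, ∀ q ∈ T, q.1 * x - q.2 < a * x - b) ∨
        ∃ x : ℝ, ∀ q ∈ T, a * x - b < q.1 * x - q.2 := by
  constructor
  · rintro ⟨⟨α, β⟩, hβ, h⟩
    dsimp only at hβ h
    rcases hβ.lt_or_gt with hβ | hβ
    · refine .inl ⟨α / -β, fun q hq => lt_of_mul_lt_mul_left ?_ (neg_nonneg.2 hβ.le)⟩
      have hx : -β * (α / -β) = α := mul_div_cancel₀ α (neg_ne_zero.2 hβ.ne)
      linear_combination h q hq + (q.1 - a) * hx
    · refine .inr ⟨-(α / β), fun q hq => lt_of_mul_lt_mul_left ?_ hβ.le⟩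
      have hx : β * (α / β) = α := mul_div_cancel₀ α hβ.ne'
      linear_combination h q hq + (q.1 - a) * hx
  · rintro (⟨x, hx⟩ | ⟨x, hx⟩)
    · exact ⟨(x, -1), by norm_num, fun q hq => by linarith [hx q hq]⟩
    · exact ⟨(-x, 1), by norm_num, fun q hq => by linarith [hx q hq]⟩

theorem extreme_iff_dual_on_envelope_general (S : Set (ℝ × ℝ)) (hS : S.Finite)
    (a b : ℝ) :
    (a, b) ∉ convexHull ℝ (S \ {(a, b)}) ↔
      ((∃ x : ℝ, ∀ q ∈ S, q ≠ (a, b) → q.1 * x - q.2 < a * x - b) ∨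
       (∃ x : ℝ, ∀ q ∈ S, q ≠ (a, b) → a * x - b < q.1 * x - q.2)) := by
  rw [(hS.sdiff (t := {(a, b)})).notMem_convexHull_iff_exists_snd_ne_zero,
    exists_snd_ne_zero_forall_lt_iff_dual_envelope]
  simp only [mem_sdiff, mem_singleton_iff, and_imp]

/-- For a finite set `S ⊆ ℝ²` and `p = (a,b) ∈ S`: `p` is an extreme point of the convex
hull of `S` (i.e. `p ∉ convexHull (S \ {p})`) iff the dual line of `p` appears on the upper
or lower envelope of the dual lines of `S`: at some `x ∈ ℝ` it is strictly above all the
other dual lines, or at some `x ∈ ℝ` it is strictly below all the other dual lines. -/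
theorem extreme_iff_dual_on_envelope (S : Set (ℝ × ℝ)) (hS : S.Finite)
    (a b : ℝ) (hp : (a, b) ∈ S) :
    (a, b) ∉ convexHull ℝ (S \ {(a, b)}) ↔
      ((∃ x : ℝ, ∀ q ∈ S, q ≠ (a, b) → q.1 * x - q.2 < a * x - b) ∨
       (∃ x : ℝ, ∀ q ∈ S, q ≠ (a, b) → a * x - b < q.1 * x - q.2)) :=
  extreme_iff_dual_on_envelope_general S hS a b
end

section
/- Let p₁, p₂, p₃, p₄ be four distinct points in ℝ² in general position. Among the three ways to partition {p₁,p₂,p₃,p₄} into two pairs, at most one partition has the property that the open segment joining the first pair intersects the open segment joining the second pair; and exactly one such partition has this property if and only if the four points are in convex position. -/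
/-- The orientation determinant of the ordered triple of points `p, q, r ∈ ℝ²`. -/
def odet (p q r : ℝ × ℝ) : ℝ :=
  (q.1 - p.1) * (r.2 - p.2) - (q.2 - p.2) * (r.1 - p.1)

/-- A set of points in the plane is in general position if no three of its points are
collinear. -/
def GenPos (S : Set (ℝ × ℝ)) : Prop :=
  ∀ p ∈ S, ∀ q ∈ S, ∀ r ∈ S, p ≠ q → p ≠ r → q ≠ r → odet p q r ≠ 0

/-- A set of points is in convex position if every point is an extreme point of the convex
hull of the set. -/
def ConvexPos (S : Set (ℝ × ℝ)) : Prop :=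
  ∀ p ∈ S, p ∉ convexHull ℝ (S \ {p})

/-- The open segments joining `a, b` and `c, d` cross. -/
def SegCross (a b c d : ℝ × ℝ) : Prop :=
  (openSegment ℝ a b ∩ openSegment ℝ c d).Nonempty

/-!
Any four points of the plane satisfy an affine relation `∑ wᵢ pᵢ = 0`, `∑ wᵢ = 0`, whose
coefficients are the signed areas of the triangles formed by the other three points; in general
position all `wᵢ` are nonzero and the relation is unique up to scale. Reading off a crossing point
or barycentric coordinates then shows that the segments `pᵢpⱼ` and `pₖpₗ` cross iff `wᵢ, wⱼ`
have one sign and `wₖ, wₗ` the other, and that `pₗ` lies in the triangle of the other three iff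
`wₗ` has the sign opposite to all the others. As the `wᵢ` sum to zero, their signs split either
two against two, in one of three ways, or one against three, in one of four ways.
-/

section
variable {E : Type*} [AddCommGroup E] [Module ℝ E]

def AffineRelation (p₁ p₂ p₃ p₄ : E) (w₁ w₂ w₃ w₄ : ℝ) : Prop :=
  w₁ + w₂ + w₃ + w₄ = 0 ∧ w₁ • p₁ + w₂ • p₂ + w₃ • p₃ + w₄ • p₄ = 0

namespace AffineRelation

variable {p₁ p₂ p₃ p₄ : E} {w₁ w₂ w₃ w₄ : ℝ}

lemma swap₁₂ (h : AffineRelation p₁ p₂ p₃ p₄ w₁ w₂ w₃ w₄) :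
    AffineRelation p₂ p₁ p₃ p₄ w₂ w₁ w₃ w₄ :=
  ⟨by linarith [h.1], by rw [← h.2]; abel⟩

lemma swap₂₃ (h : AffineRelation p₁ p₂ p₃ p₄ w₁ w₂ w₃ w₄) :
    AffineRelation p₁ p₃ p₂ p₄ w₁ w₃ w₂ w₄ :=
  ⟨by linarith [h.1], by rw [← h.2]; abel⟩

lemma swap₃₄ (h : AffineRelation p₁ p₂ p₃ p₄ w₁ w₂ w₃ w₄) :
    AffineRelation p₁ p₂ p₄ p₃ w₁ w₂ w₄ w₃ :=
  ⟨by linarith [h.1], by rw [← h.2]; abel⟩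

end AffineRelation

lemma mem_openSegment_of_mul_pos (x y : E) {w₁ w₂ : ℝ} (h : 0 < w₁ * w₂) :
    (w₁ + w₂)⁻¹ • (w₁ • x + w₂ • y) ∈ openSegment ℝ x y := by
  have hpos : 0 < w₁ / (w₁ + w₂) ∧ 0 < w₂ / (w₁ + w₂) := by
    rcases mul_pos_iff.1 h with ⟨h₁, h₂⟩ | ⟨h₁, h₂⟩
    · exact ⟨by positivity, by positivity⟩
    · exact ⟨div_pos_of_neg_of_neg h₁ (by linarith), div_pos_of_neg_of_neg h₂ (by linarith)⟩
  have hne : w₁ + w₂ ≠ 0 := fun h0 => by simp [h0] at hpos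
  refine ⟨_, _, hpos.1, hpos.2, by rw [← add_div, div_self hne], ?_⟩
  rw [smul_add, smul_smul, smul_smul, div_eq_inv_mul, div_eq_inv_mul]

lemma mem_convexHull_triple_iff {a b c p : E} :
    p ∈ convexHull ℝ {a, b, c} ↔ ∃ α β γ : ℝ, 0 ≤ α ∧ 0 ≤ β ∧ 0 ≤ γ ∧ α + β + γ = 1 ∧
      α • a + β • b + γ • c = p := by
  constructor
  · rw [convexHull_insert (Set.insert_nonempty _ _), convexHull_pair, mem_convexJoin]
    rintro ⟨_, rfl, _, ⟨s, t, hs, ht, hst, rfl⟩, ⟨u, v, hu, hv, huv, rfl⟩⟩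
    exact ⟨u, v * s, v * t, hu, by positivity, by positivity, by linear_combination v * hst + huv,
      by module⟩
  · rintro ⟨α, β, γ, hα, hβ, hγ, hsum, rfl⟩
    have hmem := (convex_convexHull ℝ ({a, b, c} : Set E)).sum_mem (t := Finset.univ)
      (w := ![α, β, γ]) (z := ![a, b, c]) (fun i _ => by fin_cases i <;> simpa)
      (by simpa [Fin.sum_univ_three] using hsum)
      (fun i _ => subset_convexHull ℝ _ (by fin_cases i <;> simp))
    simpa [Fin.sum_univ_three] using hmem
end

lemma affineRelation_odet (p₁ p₂ p₃ p₄ : ℝ × ℝ) :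
    AffineRelation p₁ p₂ p₃ p₄
      (odet p₂ p₃ p₄) (-odet p₁ p₃ p₄) (odet p₁ p₂ p₄) (-odet p₁ p₂ p₃) := by
  constructor
  · unfold odet; ring
  · ext <;> simp only [odet, Prod.fst_add, Prod.snd_add, Prod.smul_fst, Prod.smul_snd, smul_eq_mul,
      Prod.fst_zero, Prod.snd_zero] <;> ring

lemma eq_zero_of_odet_ne_zero {a b c : ℝ × ℝ} {ν₁ ν₂ ν₃ : ℝ} (hsum : ν₁ + ν₂ + ν₃ = 0)
    (hν : ν₁ • a + ν₂ • b + ν₃ • c = 0) (hD : odet a b c ≠ 0) : ν₁ = 0 ∧ ν₂ = 0 ∧ ν₃ = 0 := by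
  obtain rfl : ν₁ = -ν₂ - ν₃ := by linarith
  have e₁ := congrArg Prod.fst hν
  have e₂ := congrArg Prod.snd hν
  simp only [Prod.fst_add, Prod.snd_add, Prod.smul_fst, Prod.smul_snd, smul_eq_mul,
    Prod.fst_zero, Prod.snd_zero] at e₁ e₂
  have h₂ : ν₂ * odet a b c = 0 := by
    unfold odet; linear_combination (c.2 - a.2) * e₁ - (c.1 - a.1) * e₂
  have h₃ : ν₃ * odet a b c = 0 := by
    unfold odet; linear_combination (b.1 - a.1) * e₂ - (b.2 - a.2) * e₁
  obtain rfl := (mul_eq_zero.1 h₂).resolve_right hD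
  obtain rfl := (mul_eq_zero.1 h₃).resolve_right hD
  simp

namespace AffineRelation

variable {a b c d : ℝ × ℝ} {w₁ w₂ w₃ w₄ : ℝ}

lemma proportional {μ₁ μ₂ μ₃ μ₄ : ℝ} (hw : AffineRelation a b c d w₁ w₂ w₃ w₄)
    (hμ : AffineRelation a b c d μ₁ μ₂ μ₃ μ₄) (hD : odet a b c ≠ 0) :
    μ₁ * w₄ = μ₄ * w₁ ∧ μ₂ * w₄ = μ₄ * w₂ ∧ μ₃ * w₄ = μ₄ * w₃ := by
  obtain ⟨h₁, h₂, h₃⟩ := eq_zero_of_odet_ne_zero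
    (ν₁ := μ₁ * w₄ - μ₄ * w₁) (ν₂ := μ₂ * w₄ - μ₄ * w₂) (ν₃ := μ₃ * w₄ - μ₄ * w₃)
    (by linear_combination w₄ * hμ.1 - μ₄ * hw.1)
    (by linear_combination (norm := module) w₄ • hμ.2 - μ₄ • hw.2) hD
  exact ⟨sub_eq_zero.1 h₁, sub_eq_zero.1 h₂, sub_eq_zero.1 h₃⟩

lemma segCross_iff (hw : AffineRelation a b c d w₁ w₂ w₃ w₄) (hD : odet a b c ≠ 0)
    (h₄ : w₄ ≠ 0) : SegCross a b c d ↔ 0 < w₁ * w₂ ∧ 0 < w₃ * w₄ := by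
  constructor
  · rintro ⟨x, ⟨s, t, hs, ht, hst, rfl⟩, ⟨u, v, hu, hv, huv, hx⟩⟩
    obtain ⟨hs', ht', hu'⟩ := hw.proportional (μ₁ := s) (μ₂ := t) (μ₃ := -u) (μ₄ := -v)
      ⟨by linarith, by linear_combination (norm := module) -hx⟩ hD
    have h₁₂ : v ^ 2 * (w₁ * w₂) = s * t * w₄ ^ 2 := by
      linear_combination -t * w₄ * hs' + v * w₁ * ht'
    have h₃₄ : v * (w₃ * w₄) = u * w₄ ^ 2 := by linear_combination w₄ * hu'
    have hv₁₂ : 0 < v ^ 2 * (w₁ * w₂) := h₁₂ ▸ by positivity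
    have hv₃₄ : 0 < v * (w₃ * w₄) := h₃₄ ▸ by positivity
    exact ⟨pos_of_mul_pos_right hv₁₂ (by positivity), pos_of_mul_pos_right hv₃₄ hv.le⟩
  · rintro ⟨h₁₂, h₃₄⟩
    refine ⟨_, mem_openSegment_of_mul_pos a b h₁₂, ?_⟩
    convert mem_openSegment_of_mul_pos c d h₃₄ using 1
    rw [show w₃ + w₄ = -(w₁ + w₂) by linear_combination hw.1,
      show w₃ • c + w₄ • d = -(w₁ • a + w₂ • b) by linear_combination (norm := module) hw.2,
      inv_neg, neg_smul_neg]

lemma mem_convexHull_iff {p : ℝ × ℝ} (hw : AffineRelation a b c p w₁ w₂ w₃ w₄)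
    (hD : odet a b c ≠ 0) (h₁ : w₁ ≠ 0) (h₂ : w₂ ≠ 0) (h₃ : w₃ ≠ 0) (h₄ : w₄ ≠ 0) :
    p ∈ convexHull ℝ {a, b, c} ↔ w₁ * w₄ < 0 ∧ w₂ * w₄ < 0 ∧ w₃ * w₄ < 0 := by
  rw [mem_convexHull_triple_iff]
  constructor
  · rintro ⟨α, β, γ, hα, hβ, hγ, hsum, rfl⟩
    obtain ⟨hα', hβ', hγ'⟩ := hw.proportional (μ₁ := α) (μ₂ := β) (μ₃ := γ) (μ₄ := -1)
      ⟨by linarith, by module⟩ hD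
    have key : ∀ t w, 0 ≤ t → w ≠ 0 → t * w₄ = -1 * w → w * w₄ < 0 := fun t w ht hw₀ h => by
      have hw₄ : w * w₄ = -(t * w₄ ^ 2) := by linear_combination w₄ * h
      exact (mul_ne_zero hw₀ h₄).lt_of_le (hw₄ ▸ neg_nonpos.2 (by positivity))
    exact ⟨key α w₁ hα h₁ hα', key β w₂ hβ h₂ hβ', key γ w₃ hγ h₃ hγ'⟩
  · rintro ⟨h₁₄, h₂₄, h₃₄⟩
    have hpos : ∀ w, w * w₄ < 0 → 0 ≤ -w / w₄ := fun w h =>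
      (neg_div w₄ w ▸ neg_pos.2 (div_neg_iff.2 (mul_neg_iff.1 h))).le
    refine ⟨-w₁ / w₄, -w₂ / w₄, -w₃ / w₄, hpos _ h₁₄, hpos _ h₂₄, hpos _ h₃₄, ?_, ?_⟩
    · field_simp
      linear_combination -hw.1
    · apply smul_right_injective _ h₄
      simp only [smul_add, smul_smul, mul_div_cancel₀ _ h₄]
      linear_combination (norm := module) -hw.2

end AffineRelation

lemma convexPos_four_iff {p₁ p₂ p₃ p₄ : ℝ × ℝ} (h₁₂ : p₁ ≠ p₂) (h₁₃ : p₁ ≠ p₃) (h₁₄ : p₁ ≠ p₄)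
    (h₂₃ : p₂ ≠ p₃) (h₂₄ : p₂ ≠ p₄) (h₃₄ : p₃ ≠ p₄) :
    ConvexPos {p₁, p₂, p₃, p₄} ↔
      p₁ ∉ convexHull ℝ {p₂, p₃, p₄} ∧ p₂ ∉ convexHull ℝ {p₁, p₃, p₄} ∧
        p₃ ∉ convexHull ℝ {p₁, p₂, p₄} ∧ p₄ ∉ convexHull ℝ {p₁, p₂, p₃} := by
  simp [ConvexPos, Set.insert_sdiff_of_notMem, h₁₂, h₁₃, h₁₄, h₂₃, h₂₄, h₃₄]

lemma sign_split_of_sum_eq_zero {w₁ w₂ w₃ w₄ : ℝ}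
    (h₁ : w₁ ≠ 0) (h₂ : w₂ ≠ 0) (h₃ : w₃ ≠ 0) (h₄ : w₄ ≠ 0)
    (hsum : w₁ + w₂ + w₃ + w₄ = 0) :
    (¬ ((0 < w₁ * w₂ ∧ 0 < w₃ * w₄) ∧ (0 < w₁ * w₃ ∧ 0 < w₂ * w₄)) ∧
     ¬ ((0 < w₁ * w₂ ∧ 0 < w₃ * w₄) ∧ (0 < w₁ * w₄ ∧ 0 < w₂ * w₃)) ∧
     ¬ ((0 < w₁ * w₃ ∧ 0 < w₂ * w₄) ∧ (0 < w₁ * w₄ ∧ 0 < w₂ * w₃))) ∧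
    ((0 < w₁ * w₂ ∧ 0 < w₃ * w₄) ∨ (0 < w₁ * w₃ ∧ 0 < w₂ * w₄) ∨ (0 < w₁ * w₄ ∧ 0 < w₂ * w₃) ↔
      ¬ (w₂ * w₁ < 0 ∧ w₃ * w₁ < 0 ∧ w₄ * w₁ < 0) ∧ ¬ (w₁ * w₂ < 0 ∧ w₃ * w₂ < 0 ∧ w₄ * w₂ < 0) ∧
      ¬ (w₁ * w₃ < 0 ∧ w₂ * w₃ < 0 ∧ w₄ * w₃ < 0) ∧
      ¬ (w₁ * w₄ < 0 ∧ w₂ * w₄ < 0 ∧ w₃ * w₄ < 0)) := by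
  simp only [mul_pos_iff, mul_neg_iff]
  rcases h₁.lt_or_gt with h₁ | h₁ <;> rcases h₂.lt_or_gt with h₂ | h₂ <;>
    rcases h₃.lt_or_gt with h₃ | h₃ <;> rcases h₄.lt_or_gt with h₄ | h₄ <;>
    first | (exfalso; linarith) | grind

/-- For four distinct points in general position, among the three partitions of the four
points into two pairs, at most one has crossing open segments, and exactly one has crossing
open segments iff the four points are in convex position. -/
theorem four_points_crossing_partition (p₁ p₂ p₃ p₄ : ℝ × ℝ)
    (h₁₂ : p₁ ≠ p₂) (h₁₃ : p₁ ≠ p₃) (h₁₄ : p₁ ≠ p₄)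
    (h₂₃ : p₂ ≠ p₃) (h₂₄ : p₂ ≠ p₄) (h₃₄ : p₃ ≠ p₄)
    (hgp : GenPos {p₁, p₂, p₃, p₄}) :
    (¬ (SegCross p₁ p₂ p₃ p₄ ∧ SegCross p₁ p₃ p₂ p₄) ∧
     ¬ (SegCross p₁ p₂ p₃ p₄ ∧ SegCross p₁ p₄ p₂ p₃) ∧
     ¬ (SegCross p₁ p₃ p₂ p₄ ∧ SegCross p₁ p₄ p₂ p₃)) ∧
    ((SegCross p₁ p₂ p₃ p₄ ∨ SegCross p₁ p₃ p₂ p₄ ∨ SegCross p₁ p₄ p₂ p₃) ↔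
      ConvexPos {p₁, p₂, p₃, p₄}) := by
  have d₁₂₃ : odet p₁ p₂ p₃ ≠ 0 := hgp _ (by simp) _ (by simp) _ (by simp) h₁₂ h₁₃ h₂₃
  have d₁₃₂ : odet p₁ p₃ p₂ ≠ 0 := hgp _ (by simp) _ (by simp) _ (by simp) h₁₃ h₁₂ h₂₃.symm
  have d₁₄₂ : odet p₁ p₄ p₂ ≠ 0 := hgp _ (by simp) _ (by simp) _ (by simp) h₁₄ h₁₂ h₂₄.symm
  have d₁₂₄ : odet p₁ p₂ p₄ ≠ 0 := hgp _ (by simp) _ (by simp) _ (by simp) h₁₂ h₁₄ h₂₄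
  have d₁₃₄ : odet p₁ p₃ p₄ ≠ 0 := hgp _ (by simp) _ (by simp) _ (by simp) h₁₃ h₁₄ h₃₄
  have d₂₃₄ : odet p₂ p₃ p₄ ≠ 0 := hgp _ (by simp) _ (by simp) _ (by simp) h₂₃ h₂₄ h₃₄
  have hw := affineRelation_odet p₁ p₂ p₃ p₄
  have n₁₃₄ := neg_ne_zero.2 d₁₃₄
  have n₁₂₃ := neg_ne_zero.2 d₁₂₃
  rw [hw.segCross_iff d₁₂₃ n₁₂₃, hw.swap₂₃.segCross_iff d₁₃₂ n₁₂₃,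
    hw.swap₃₄.swap₂₃.segCross_iff d₁₄₂ d₁₂₄,
    convexPos_four_iff h₁₂ h₁₃ h₁₄ h₂₃ h₂₄ h₃₄,
    hw.swap₁₂.swap₂₃.swap₃₄.mem_convexHull_iff d₂₃₄ n₁₃₄ d₁₂₄ n₁₂₃ d₂₃₄,
    hw.swap₂₃.swap₃₄.mem_convexHull_iff d₁₃₄ d₂₃₄ d₁₂₄ n₁₂₃ n₁₃₄,
    hw.swap₃₄.mem_convexHull_iff d₁₂₄ d₂₃₄ n₁₃₄ n₁₂₃ d₁₂₄,
    hw.mem_convexHull_iff d₁₂₃ d₂₃₄ n₁₃₄ d₁₂₄ n₁₂₃]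
  exact sign_split_of_sum_eq_zero d₂₃₄ n₁₃₄ d₁₂₄ n₁₂₃ hw.1
end

section
/- Let S ⊆ ℝ² be a set of n ≥ 4 points in general position. Then the number of crossings of S equals C(n,4) if and only if S is in convex position. (The maximum possible number of crossings, C(n,4), is achieved exactly by points in convex position.) -/
/-- The number of crossings of a planar point set `S`: the number of unordered pairs
`{ {a,b}, {c,d} }` of disjoint two-element subsets of `S` such that the open segment
joining `a` and `b` intersects the open segment joining `c` and `d`. -/
noncomputable def cr (S : Set (ℝ × ℝ)) : ℕ :=
  Nat.card {x : Sym2 (Sym2 (ℝ × ℝ)) //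
    ∃ a b c d : ℝ × ℝ, x = s(s(a, b), s(c, d)) ∧
      a ∈ S ∧ b ∈ S ∧ c ∈ S ∧ d ∈ S ∧ a ≠ b ∧ c ≠ d ∧
      ({a, b} : Set (ℝ × ℝ)) ∩ {c, d} = ∅ ∧
      (openSegment ℝ a b ∩ openSegment ℝ c d).Nonempty}

/-!
A crossing is determined by its four endpoints. For four points in general position, the signs
of the orientations `p, q, r, s` of the triples `abc, abd, acd, bcd` decide everything: each
possible sign pattern either makes exactly one of the three pairings `ab|cd, ac|bd, ad|bc` cross
(the identity `s - r + q - p = 0` rules out two crossing pairings) or puts one point inside the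
triangle of the other three. So a four-point set has one crossing if it is in convex position and
none otherwise, and `cr S` is the number of 4-subsets of `S` in convex position. By
Carathéodory's theorem, a point of `S` in the convex hull of the others lies in the hull of three
of them, so `S` is in convex position iff all its 4-subsets are.
-/

section Orientation

variable (a b c d : ℝ × ℝ)

lemma odet_rotate : odet b c a = odet a b c := by unfold odet; ring

lemma odet_swap : odet a c b = -odet a b c := by unfold odet; ring

lemma odet_alternating_sum : odet b c d - odet a c d + odet a b d - odet a b c = 0 := by
  unfold odet; ring

lemma odet_smul_alternating_sum :
    odet b c d • a - odet a c d • b + odet a b d • c - odet a b c • d = 0 := by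
  ext <;> simp only [odet, Prod.fst_sub, Prod.snd_sub, Prod.fst_add, Prod.snd_add,
    Prod.smul_fst, Prod.smul_snd, smul_eq_mul, Prod.fst_zero, Prod.snd_zero] <;> ring

lemma odet_eq_zero_of_mem_openSegment {x : ℝ × ℝ} (hx : x ∈ openSegment ℝ a b) : odet a b x = 0 := by
  obtain ⟨u, v, -, -, huv, rfl⟩ := hx
  obtain rfl : v = 1 - u := by linarith
  simp only [odet, Prod.fst_add, Prod.snd_add, Prod.smul_fst, Prod.smul_snd, smul_eq_mul]
  ring

variable {a b c d}

lemma odet_combo {u v : ℝ} (huv : u + v = 1) :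
    odet a b (u • c + v • d) = u * odet a b c + v * odet a b d := by
  obtain rfl : v = 1 - u := by linarith
  simp only [odet, Prod.fst_add, Prod.snd_add, Prod.smul_fst, Prod.smul_snd, smul_eq_mul]
  ring

end Orientation

lemma div_sub_pos_of_mul_neg {r s : ℝ} (h : r * s < 0) : 0 < r / (r - s) := by
  rcases mul_neg_iff.1 h with ⟨hr, hs⟩ | ⟨hr, hs⟩
  · exact div_pos hr (by linarith)
  · exact div_pos_of_neg_of_neg hr (by linarith)

def SegmentsCross (a b c d : ℝ × ℝ) : Prop :=
  (openSegment ℝ a b ∩ openSegment ℝ c d).Nonempty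

section SegmentsCross

variable {a b c d : ℝ × ℝ}

lemma SegmentsCross.symm (h : SegmentsCross a b c d) : SegmentsCross c d a b := by
  rwa [SegmentsCross, Set.inter_comm]

lemma segmentsCross_congr {a' b' c' d' : ℝ × ℝ}
    (h : s(s(a, b), s(c, d)) = s(s(a', b'), s(c', d'))) :
    SegmentsCross a b c d ↔ SegmentsCross a' b' c' d' := by
  let seg : Sym2 (ℝ × ℝ) → Set (ℝ × ℝ) := Sym2.lift ⟨openSegment ℝ, openSegment_symm ℝ⟩
  let crosses : Sym2 (Sym2 (ℝ × ℝ)) → Prop :=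
    Sym2.lift ⟨fun e f => (seg e ∩ seg f).Nonempty, fun e f => by simp only [Set.inter_comm]⟩
  show crosses s(s(a, b), s(c, d)) ↔ crosses s(s(a', b'), s(c', d'))
  rw [h]

lemma SegmentsCross.odet_mul_neg (h : SegmentsCross a b c d) (hc : odet a b c ≠ 0) :
    odet a b c * odet a b d < 0 := by
  obtain ⟨x, hxab, u, v, hu, hv, huv, rfl⟩ := h
  have hzero : u * odet a b c + v * odet a b d = 0 := by
    rw [← odet_combo huv]; exact odet_eq_zero_of_mem_openSegment a b hxab
  have : v * (odet a b c * odet a b d) = -(u * (odet a b c * odet a b c)) := by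
    linear_combination odet a b c * hzero
  nlinarith [mul_pos hu (mul_self_pos.2 hc)]

lemma segmentsCross_of_odet_mul_neg (hab : odet a b c * odet a b d < 0)
    (hcd : odet c d a * odet c d b < 0) : SegmentsCross a b c d := by
  set p := odet a b c
  set q := odet a b d
  set r := odet c d a
  set s := odet c d b
  have hpq : p - q ≠ 0 := fun h => (div_sub_pos_of_mul_neg hab).ne' (by rw [h, div_zero])
  have hrs : r - s ≠ 0 := fun h => (div_sub_pos_of_mul_neg hcd).ne' (by rw [h, div_zero])
  have hsr : s * r < 0 := by rwa [mul_comm]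
  have hqp : q * p < 0 := by rwa [mul_comm]
  refine ⟨(s / (s - r)) • a + (r / (r - s)) • b,
    ⟨s / (s - r), r / (r - s), div_sub_pos_of_mul_neg hsr, div_sub_pos_of_mul_neg hcd, ?_, rfl⟩,
    ⟨q / (q - p), p / (p - q), div_sub_pos_of_mul_neg hqp, div_sub_pos_of_mul_neg hab, ?_, ?_⟩⟩
  · have : s - r ≠ 0 := fun h => hrs (by linarith)
    field_simp
    ring
  · have : q - p ≠ 0 := fun h => hpq (by linarith)
    field_simp
    ring
  · have hsum : s - r + q - p = 0 := by
      simpa only [r, s, odet_rotate] using odet_alternating_sum a b c d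
    have hvec : s • a - r • b + q • c - p • d = 0 := by
      simpa only [r, s, odet_rotate] using odet_smul_alternating_sum a b c d
    have h₁ : s - r = p - q := by linarith
    have h₂ : r - s = -(p - q) := by linarith
    have h₃ : q - p = -(p - q) := by ring
    rw [h₁, h₂, h₃, div_neg, div_neg]
    ext
    · have := congrArg Prod.fst hvec
      simp only [Prod.fst_add, Prod.fst_sub, Prod.smul_fst, smul_eq_mul, Prod.fst_zero] at this ⊢
      field_simp
      linear_combination -this
    · have := congrArg Prod.snd hvec
      simp only [Prod.snd_add, Prod.snd_sub, Prod.smul_snd, smul_eq_mul, Prod.snd_zero] at this ⊢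
      field_simp
      linear_combination -this

end SegmentsCross

section Signs

variable {p q r s : ℝ}

/- With `p, q, r, s` the orientations of `abc, abd, acd, bcd`, the alternatives are: `ab|cd`,
`ac|bd`, `ad|bc` cross, or `d`, `a`, `b`, `c` lies in the triangle of the other three. -/
lemma four_signs_cases (hp : p ≠ 0) (hq : q ≠ 0) (hr : r ≠ 0) (hs : s ≠ 0) :
    (p * q < 0 ∧ r * s < 0) ∨ (-p * r < 0 ∧ q * -s < 0) ∨ (-q * -r < 0 ∧ p * s < 0) ∨
    (0 < p * s ∧ 0 < p * -r ∧ 0 < p * q) ∨ (0 < s * r ∧ 0 < s * -q ∧ 0 < s * p) ∨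
    (0 < r * s ∧ 0 < r * q ∧ 0 < r * -p) ∨ (0 < q * -s ∧ 0 < q * r ∧ 0 < q * p) := by
  rcases hp.lt_or_gt with hp | hp <;> rcases hq.lt_or_gt with hq | hq <;>
    rcases hr.lt_or_gt with hr | hr <;> rcases hs.lt_or_gt with hs | hs <;>
    simp [mul_pos_iff, mul_neg_iff, hp, hq, hr, hs, hp.not_gt, hq.not_gt, hr.not_gt,
      hs.not_gt]

lemma four_signs_exclusive (h : s - r + q - p = 0) (hpq : p * q < 0) (hrs : r * s < 0) :
    ¬ (-p * r < 0 ∧ q * -s < 0) ∧ ¬ (-q * -r < 0 ∧ p * s < 0) := by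
  rcases mul_neg_iff.1 hpq with ⟨hp, hq⟩ | ⟨hp, hq⟩ <;>
    rcases mul_neg_iff.1 hrs with ⟨hr, hs⟩ | ⟨hr, hs⟩ <;>
    simp [mul_pos_iff, mul_neg_iff, hp, hq, hr, hs, hp.not_gt, hq.not_gt, hr.not_gt,
      hs.not_gt] <;> linarith

end Signs

section Triangle

variable {a b c d : ℝ × ℝ}

lemma notMem_convexHull_of_odet_mul_neg {T : Set (ℝ × ℝ)} (hT : T ⊆ {a, b, c})
    (h : odet a b c * odet a b d < 0) : d ∉ convexHull ℝ T := by
  let H : Set (ℝ × ℝ) := {x | 0 ≤ odet a b c * odet a b x}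
  have hH : Convex ℝ H := by
    intro x hx y hy u v hu hv huv
    simp only [H, Set.mem_ofPred_eq, odet_combo huv] at hx hy ⊢
    nlinarith [mul_nonneg hu hx, mul_nonneg hv hy]
  have hTH : T ⊆ H := hT.trans <| by
    rintro x (rfl | rfl | rfl) <;> simp only [H, Set.mem_ofPred_eq]
    · simp [odet]
    · exact le_of_eq (by unfold odet; ring)
    · exact mul_self_nonneg _
  exact fun hd => (convexHull_min hTH hH hd).not_gt h

lemma div_pos_of_mul_pos {x y : ℝ} (h : 0 < x * y) : 0 < y / x :=
  div_pos_iff.2 ((mul_pos_iff.1 h).imp And.symm And.symm)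

lemma mem_convexHull_of_odet_mul_pos (h₁ : 0 < odet a b c * odet d b c)
    (h₂ : 0 < odet a b c * odet a d c) (h₃ : 0 < odet a b c * odet a b d) :
    d ∈ convexHull ℝ {a, b, c} := by
  have hΔ : odet a b c ≠ 0 := fun h => by simp [h] at h₁
  have hd : d = ∑ i, ![odet d b c / odet a b c, odet a d c / odet a b c,
      odet a b d / odet a b c] i • ![a, b, c] i := by
    simp only [Fin.sum_univ_three, Matrix.cons_val_zero, Matrix.cons_val_one,
      Matrix.cons_val_two, Matrix.head_cons, Matrix.tail_cons]
    ext <;> simp only [Prod.fst_add, Prod.snd_add, Prod.smul_fst, Prod.smul_snd,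
      smul_eq_mul] <;> field_simp <;> unfold odet <;> ring
  rw [hd]
  refine (convex_convexHull ℝ _).sum_mem (fun i _ => ?_) ?_ (fun i _ => ?_)
  · fin_cases i
    exacts [(div_pos_of_mul_pos h₁).le, (div_pos_of_mul_pos h₂).le, (div_pos_of_mul_pos h₃).le]
  · simp only [Fin.sum_univ_three, Matrix.cons_val_zero, Matrix.cons_val_one,
      Matrix.cons_val_two, Matrix.head_cons, Matrix.tail_cons]
    field_simp
    unfold odet
    ring
  · apply subset_convexHull
    fin_cases i <;> simp

end Triangle

lemma ConvexPos.notMem_convexHull {S T : Set (ℝ × ℝ)} {x : ℝ × ℝ} (h : ConvexPos S)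
    (hx : x ∈ S) (hT : T ⊆ S) (hxT : x ∉ T) : x ∉ convexHull ℝ T :=
  fun hmem => h x hx <| convexHull_mono
    (show T ⊆ S \ {x} from fun _ hy => ⟨hT hy, fun hyx => hxT (hyx ▸ hy)⟩) hmem

lemma ConvexPos.mono {S T : Set (ℝ × ℝ)} (h : ConvexPos S) (hTS : T ⊆ S) : ConvexPos T :=
  fun _ hx => h.notMem_convexHull (hTS hx) (Set.sdiff_subset.trans hTS) (fun hx' => hx'.2 rfl)

section FourPoints

variable {a b c d : ℝ × ℝ}

lemma SegmentsCross.convexPos (h : SegmentsCross a b c d) (hc : odet a b c ≠ 0)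
    (ha : odet c d a ≠ 0) : ConvexPos {a, b, c, d} := by
  have hab := h.odet_mul_neg hc
  have hcd := h.symm.odet_mul_neg ha
  have hba : odet a b d * odet a b c < 0 := by rwa [mul_comm]
  have hdc : odet c d b * odet c d a < 0 := by rwa [mul_comm]
  rintro x (rfl | rfl | rfl | rfl)
  · exact notMem_convexHull_of_odet_mul_neg (by intro y; simp; tauto) hdc
  · exact notMem_convexHull_of_odet_mul_neg (by intro y; simp; tauto) hcd
  · exact notMem_convexHull_of_odet_mul_neg (by intro y; simp; tauto) hba
  · exact notMem_convexHull_of_odet_mul_neg (by intro y; simp; tauto) hab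

lemma SegmentsCross.not_segmentsCross (hp : odet a b c ≠ 0) (hq : odet a b d ≠ 0)
    (hr : odet a c d ≠ 0) (h : SegmentsCross a b c d) :
    ¬ SegmentsCross a c b d ∧ ¬ SegmentsCross a d b c := by
  have hpq := h.odet_mul_neg hp
  have hrs := h.symm.odet_mul_neg (by rwa [odet_rotate])
  rw [odet_rotate, odet_rotate b c d] at hrs
  obtain ⟨h₂, h₃⟩ := four_signs_exclusive (odet_alternating_sum a b c d) hpq hrs
  refine ⟨fun h' => h₂ ?_, fun h' => h₃ ?_⟩
  · have h₁ := h'.odet_mul_neg (by rwa [odet_swap, neg_ne_zero])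
    have h₂ := h'.symm.odet_mul_neg (by rwa [odet_rotate])
    rw [odet_swap a b c] at h₁
    rw [odet_rotate, odet_swap b c d] at h₂
    exact ⟨h₁, h₂⟩
  · have h₁ := h'.odet_mul_neg (by rwa [odet_swap, neg_ne_zero])
    have h₂ := h'.symm.odet_mul_neg (by rwa [odet_rotate])
    rw [odet_swap a b d, odet_swap a c d] at h₁
    rw [odet_rotate] at h₂
    exact ⟨h₁, h₂⟩

lemma exists_segmentsCross_of_notMem_convexHull (hp : odet a b c ≠ 0) (hq : odet a b d ≠ 0)
    (hr : odet a c d ≠ 0) (hs : odet b c d ≠ 0) (ha : a ∉ convexHull ℝ {b, c, d})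
    (hb : b ∉ convexHull ℝ {a, c, d}) (hc : c ∉ convexHull ℝ {a, b, d})
    (hd : d ∉ convexHull ℝ {a, b, c}) :
    SegmentsCross a b c d ∨ SegmentsCross a c b d ∨ SegmentsCross a d b c := by
  rcases four_signs_cases hp hq hr hs with h | h | h | h | h | h | h
  · left
    exact segmentsCross_of_odet_mul_neg h.1 (by rw [odet_rotate, odet_rotate b c d]; exact h.2)
  · right; left
    exact segmentsCross_of_odet_mul_neg (by rw [odet_swap a b c]; exact h.1)
      (by rw [odet_rotate, odet_swap b c d]; exact h.2)
  · right; right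
    exact segmentsCross_of_odet_mul_neg (by rw [odet_swap a b d, odet_swap a c d]; exact h.1)
      (by rw [odet_rotate]; exact h.2)
  · exact absurd (mem_convexHull_of_odet_mul_pos (by rw [← odet_rotate d b c]; exact h.1)
      (by rw [odet_swap a c d]; exact h.2.1) h.2.2) hd
  · exact absurd (mem_convexHull_of_odet_mul_pos h.1
      (by rw [← odet_rotate b a d, odet_swap a b d]; exact h.2.1)
      (by rw [odet_rotate a b c]; exact h.2.2)) ha
  · exact absurd (mem_convexHull_of_odet_mul_pos h.1 h.2.1
      (by rw [odet_swap a b c]; exact h.2.2)) hb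
  · exact absurd (mem_convexHull_of_odet_mul_pos
      (by rw [← odet_rotate c b d, odet_swap b c d]; exact h.1) h.2.1 h.2.2) hc

end FourPoints

lemma pair_inter_pair_eq_empty_iff {α : Type*} {a b c d : α} :
    ({a, b} : Set α) ∩ {c, d} = ∅ ↔ a ≠ c ∧ a ≠ d ∧ b ≠ c ∧ b ≠ d := by
  simp [Set.eq_empty_iff_forall_notMem]
  tauto

section Pairings

variable {α : Type*} [DecidableEq α]

def pairsSupport (x : Sym2 (Sym2 α)) : Finset α := (x.map Sym2.toFinset).sup

lemma pairsSupport_mk (a b c d : α) : pairsSupport s(s(a, b), s(c, d)) = {a, b, c, d} := by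
  simp only [pairsSupport, Sym2.map_mk, Sym2.sup_mk, Sym2.toFinset_mk_eq, Finset.sup_eq_union,
    Finset.insert_union, Finset.singleton_union]

lemma eq_pairing_of_finset_eq {a b c d a' b' c' d' : α}
    (h : ({a', b', c', d'} : Finset α) = {a, b, c, d}) (hab : a' ≠ b') (hac : a' ≠ c')
    (had : a' ≠ d') (hbc : b' ≠ c') (hbd : b' ≠ d') (hcd : c' ≠ d') :
    s(s(a', b'), s(c', d')) = s(s(a, b), s(c, d)) ∨
      s(s(a', b'), s(c', d')) = s(s(a, c), s(b, d)) ∨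
      s(s(a', b'), s(c', d')) = s(s(a, d), s(b, c)) := by
  have hmem : ∀ x ∈ ({a', b', c', d'} : Finset α), x = a ∨ x = b ∨ x = c ∨ x = d := by
    intro x hx; simpa [h] using hx
  rcases hmem a' (by simp) with rfl | rfl | rfl | rfl <;>
    rcases hmem b' (by simp) with rfl | rfl | rfl | rfl <;>
    rcases hmem c' (by simp) with rfl | rfl | rfl | rfl <;>
    rcases hmem d' (by simp) with rfl | rfl | rfl | rfl <;>
    simp_all [Sym2.eq_swap]

end Pairings

def IsCrossing (S : Set (ℝ × ℝ)) (x : Sym2 (Sym2 (ℝ × ℝ))) : Prop :=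
  ∃ a b c d : ℝ × ℝ, x = s(s(a, b), s(c, d)) ∧ a ∈ S ∧ b ∈ S ∧ c ∈ S ∧ d ∈ S ∧ a ≠ b ∧ c ≠ d ∧
    ({a, b} : Set (ℝ × ℝ)) ∩ {c, d} = ∅ ∧ SegmentsCross a b c d

lemma cr_eq_natCard_isCrossing (S : Set (ℝ × ℝ)) : cr S = Nat.card {x // IsCrossing S x} := rfl

open Classical in
noncomputable def convexQuadruples (S : Finset (ℝ × ℝ)) : Finset (Finset (ℝ × ℝ)) :=
  (S.powersetCard 4).filter fun T => ConvexPos (T : Set (ℝ × ℝ))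

section Counting

open Finset Classical

variable {S : Finset (ℝ × ℝ)}

lemma IsCrossing.pairsSupport_mem (hgp : GenPos ↑S) {x : Sym2 (Sym2 (ℝ × ℝ))}
    (hx : IsCrossing ↑S x) : pairsSupport x ∈ convexQuadruples S := by
  obtain ⟨a, b, c, d, rfl, ha, hb, hc, hd, hab, hcd, hdisj, hx⟩ := hx
  obtain ⟨hac, had, hbc, hbd⟩ := pair_inter_pair_eq_empty_iff.1 hdisj
  rw [pairsSupport_mk, convexQuadruples, mem_filter, mem_powersetCard, card_eq_four]
  refine ⟨⟨?_, a, b, c, d, hab, hac, had, hbc, hbd, hcd, rfl⟩, ?_⟩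
  · simp only [insert_subset_iff, singleton_subset_iff]
    exact ⟨ha, hb, hc, hd⟩
  · push_cast
    exact hx.convexPos (hgp a ha b hb c hc hab hac hbc) (hgp c hc d hd a ha hcd hac.symm had.symm)

lemma IsCrossing.eq_of_pairsSupport_eq (hgp : GenPos ↑S) {x y : Sym2 (Sym2 (ℝ × ℝ))}
    (hx : IsCrossing ↑S x) (hy : IsCrossing ↑S y) (h : pairsSupport x = pairsSupport y) :
    x = y := by
  obtain ⟨a, b, c, d, rfl, ha, hb, hc, hd, hab, hcd, hdisj, hx⟩ := hx
  obtain ⟨a', b', c', d', rfl, -, -, -, -, hab', hcd', hdisj', hy⟩ := hy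
  obtain ⟨hac, had, hbc, hbd⟩ := pair_inter_pair_eq_empty_iff.1 hdisj
  obtain ⟨hac', had', hbc', hbd'⟩ := pair_inter_pair_eq_empty_iff.1 hdisj'
  rw [pairsSupport_mk, pairsSupport_mk] at h
  obtain ⟨hx₂, hx₃⟩ := hx.not_segmentsCross (hgp a ha b hb c hc hab hac hbc)
    (hgp a ha b hb d hd hab had hbd) (hgp a ha c hc d hd hac had hcd)
  rcases eq_pairing_of_finset_eq h.symm hab' hac' had' hbc' hbd' hcd' with e | e | e
  · exact e.symm
  · exact absurd ((segmentsCross_congr e).1 hy) hx₂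
  · exact absurd ((segmentsCross_congr e).1 hy) hx₃

lemma exists_isCrossing_pairsSupport_eq (hgp : GenPos ↑S) {T : Finset (ℝ × ℝ)}
    (hT : T ∈ convexQuadruples S) :
    ∃ x, IsCrossing ↑S x ∧ pairsSupport x = T := by
  rw [convexQuadruples, mem_filter, mem_powersetCard] at hT
  obtain ⟨⟨hTS, hT4⟩, hconv⟩ := hT
  obtain ⟨a, b, c, d, hab, hac, had, hbc, hbd, hcd, rfl⟩ := card_eq_four.1 hT4
  simp only [insert_subset_iff, singleton_subset_iff] at hTS
  obtain ⟨ha, hb, hc, hd⟩ := hTS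
  push_cast at hconv
  rcases exists_segmentsCross_of_notMem_convexHull (hgp a ha b hb c hc hab hac hbc)
      (hgp a ha b hb d hd hab had hbd) (hgp a ha c hc d hd hac had hcd)
      (hgp b hb c hc d hd hbc hbd hcd)
      (hconv.notMem_convexHull (by simp) (by intro; simp; tauto) (by simp [hab, hac, had]))
      (hconv.notMem_convexHull (by simp) (by intro; simp; tauto) (by simp [hab.symm, hbc, hbd]))
      (hconv.notMem_convexHull (by simp) (by intro; simp; tauto)
        (by simp [hac.symm, hbc.symm, hcd]))
      (hconv.notMem_convexHull (by simp) (by intro; simp; tauto)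
        (by simp [had.symm, hbd.symm, hcd.symm])) with h | h | h
  · exact ⟨_, ⟨a, b, c, d, rfl, ha, hb, hc, hd, hab, hcd,
      pair_inter_pair_eq_empty_iff.2 ⟨hac, had, hbc, hbd⟩, h⟩, pairsSupport_mk a b c d⟩
  · exact ⟨_, ⟨a, c, b, d, rfl, ha, hc, hb, hd, hac, hbd,
      pair_inter_pair_eq_empty_iff.2 ⟨hab, had, hbc.symm, hcd⟩, h⟩,
      by rw [pairsSupport_mk, insert_comm c b]⟩
  · exact ⟨_, ⟨a, d, b, c, rfl, ha, hd, hb, hc, had, hbc,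
      pair_inter_pair_eq_empty_iff.2 ⟨hab, hac, hbd.symm, hcd.symm⟩, h⟩,
      by rw [pairsSupport_mk, insert_comm d b, pair_comm d c]⟩

lemma cr_eq_card_convexQuadruples (hgp : GenPos ↑S) :
    cr ↑S = (convexQuadruples S).card := by
  rw [cr_eq_natCard_isCrossing, ← Nat.card_eq_finsetCard]
  refine Nat.card_eq_of_bijective
    (fun x : {x // IsCrossing ↑S x} => ⟨pairsSupport x.1, x.2.pairsSupport_mem hgp⟩) ⟨?_, ?_⟩
  · exact fun x y h =>
      Subtype.ext (IsCrossing.eq_of_pairsSupport_eq hgp x.2 y.2 (congrArg Subtype.val h))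
  · rintro ⟨T, hT⟩
    obtain ⟨x, hx, rfl⟩ := exists_isCrossing_pairsSupport_eq hgp hT
    exact ⟨⟨x, hx⟩, rfl⟩

end Counting

lemma convexPos_of_forall_card_eq_four {S : Finset (ℝ × ℝ)} (hS : 4 ≤ S.card)
    (h : ∀ T ⊆ S, T.card = 4 → ConvexPos (T : Set (ℝ × ℝ))) : ConvexPos (S : Set (ℝ × ℝ)) := by
  intro p hp hmem
  rw [convexHull_eq_union] at hmem
  simp only [Set.mem_iUnion] at hmem
  obtain ⟨t, hts, hind, hpt⟩ := hmem
  have ht : t.card ≤ 3 := by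
    have hrank := (vectorSpan ℝ (Set.range ((↑) : t → ℝ × ℝ))).finrank_le
    rw [Module.finrank_prod, Module.finrank_self] at hrank
    have := hind.card_le_finrank_succ
    rw [Fintype.card_coe] at this
    omega
  obtain ⟨T, hpT, hTS, hT⟩ := Finset.exists_subsuperset_card_eq
    (Finset.insert_subset (Finset.mem_coe.1 hp) fun x hx => (hts hx).1)
    ((Finset.card_insert_le p t).trans (by omega)) hS
  refine (h T hTS hT).notMem_convexHull (Finset.mem_coe.2 (hpT (Finset.mem_insert_self p t)))
    (fun x hx => hpT (Finset.mem_insert_of_mem hx)) (fun hpt' => (hts hpt').2 rfl) hpt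

lemma convexPos_iff_forall_card_eq_four {S : Finset (ℝ × ℝ)} (hS : 4 ≤ S.card) :
    ConvexPos (S : Set (ℝ × ℝ)) ↔ ∀ T ∈ S.powersetCard 4, ConvexPos (T : Set (ℝ × ℝ)) := by
  simp only [Finset.mem_powersetCard, and_imp]
  exact ⟨fun h T hTS _ => h.mono (Finset.coe_subset.2 hTS), convexPos_of_forall_card_eq_four hS⟩

/-- For a set `S` of `n ≥ 4` points in general position, the number of crossings of `S`
equals `C(n,4)` if and only if `S` is in convex position. -/
theorem cr_eq_choose_four_iff_convexPos (S : Finset (ℝ × ℝ)) (hn : 4 ≤ S.card)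
    (hgp : GenPos ↑S) :
    cr ↑S = S.card.choose 4 ↔ ConvexPos ↑S := by
  classical
  rw [cr_eq_card_convexQuadruples hgp, convexPos_iff_forall_card_eq_four hn,
    ← Finset.card_powersetCard, convexQuadruples, Finset.card_filter_eq_iff]
end

section
/- Every set of 12 points in the plane in general position that is not in convex position has at most 486 crossings. (The second-largest possible crossing number for 12 points is 486; no number of crossings strictly between 486 and 495 = C(12,4) is attainable.) -/
/-! ### Auxiliary lemmas -/

section Aux

lemma odet_rot (p q r : ℝ × ℝ) : odet q r p = odet p q r := by simp only [odet]; ring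

lemma odet_swap23 (p q r : ℝ × ℝ) : odet p r q = - odet p q r := by simp only [odet]; ring

lemma odet_affine {a b c d x : ℝ × ℝ} {w z : ℝ} (hwz : w + z = 1)
    (hx : w • c + z • d = x) : odet a b x = w * odet a b c + z * odet a b d := by
  obtain ⟨hx1, hx2⟩ := Prod.ext_iff.1 hx
  simp only [Prod.fst_add, Prod.snd_add, Prod.smul_fst, Prod.smul_snd, smul_eq_mul] at hx1 hx2
  simp only [odet]
  linear_combination -(b.1 - a.1) * hx2 + (b.2 - a.2) * hx1 +
    ((b.1 - a.1) * a.2 - (b.2 - a.2) * a.1) * hwz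

lemma odet_zero_of_segment {a b x : ℝ × ℝ} {u v : ℝ} (huv : u + v = 1)
    (hx : u • a + v • b = x) : odet a b x = 0 := by
  rw [odet_affine huv hx]
  simp only [odet]; ring

lemma cross_odet {a b c d x : ℝ × ℝ} (hx : x ∈ openSegment ℝ a b)
    (hx' : x ∈ openSegment ℝ c d) (h1 : odet a b c ≠ 0) (_h2 : odet a b d ≠ 0) :
    odet a b c * odet a b d < 0 := by
  obtain ⟨u, v, hu, hv, huv, hxe⟩ := hx
  obtain ⟨w, z, hw, hz, hwz, hxe'⟩ := hx'
  have h0 : odet a b x = 0 := odet_zero_of_segment huv hxe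
  have hk : w * odet a b c + z * odet a b d = 0 := by
    rw [← odet_affine hwz hxe']; exact h0
  rcases h1.lt_or_gt with hP | hP
  · have hQ : 0 < odet a b d := by
      by_contra hQ
      push_neg at hQ
      nlinarith
    exact mul_neg_of_neg_of_pos hP hQ
  · have hQ : odet a b d < 0 := by
      by_contra hQ
      push_neg at hQ
      nlinarith
    exact mul_neg_of_pos_of_neg hP hQ

/-- `X a b c d` : the open segments `ab` and `cd` cross. -/
def X (a b c d : ℝ × ℝ) : Prop := (openSegment ℝ a b ∩ openSegment ℝ c d).Nonempty

lemma X.swapL {a b c d : ℝ × ℝ} (h : X a b c d) : X b a c d := by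
  rwa [X, openSegment_symm ℝ b a]

lemma X.swapR {a b c d : ℝ × ℝ} (h : X a b c d) : X a b d c := by
  rwa [X, openSegment_symm ℝ d c]

lemma X.comm {a b c d : ℝ × ℝ} (h : X a b c d) : X c d a b := by
  rwa [X, Set.inter_comm]

/-- Two different pairings of four points cannot both cross. -/
lemma excl {a b c d : ℝ × ℝ} (hp : odet a b c ≠ 0) (hq : odet a b d ≠ 0)
    (hr : odet a c d ≠ 0) (hs : odet b c d ≠ 0) (h1 : X a b c d) (h2 : X a c b d) :
    False := by
  obtain ⟨x, hx1, hx2⟩ := h1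
  obtain ⟨y, hy1, hy2⟩ := h2
  have key : odet a b c - odet a b d + odet a c d - odet b c d = 0 := by
    simp only [odet]; ring
  have e1 : odet a b c * odet a b d < 0 := cross_odet hx1 hx2 hp hq
  have e2 : odet a c d * odet b c d < 0 := by
    have h := cross_odet hx2 hx1 (by rw [odet_rot a c d]; exact hr)
      (by rw [odet_rot b c d]; exact hs)
    rwa [odet_rot a c d, odet_rot b c d] at h
  have e3 : 0 < odet a b c * odet a c d := by
    have h := cross_odet hy1 hy2 (by rw [odet_swap23 a b c]; exact neg_ne_zero.2 hp) hr
    rw [odet_swap23 a b c, neg_mul, neg_lt, neg_zero] at h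
    exact h
  have e4 : 0 < odet a b d * odet b c d := by
    have h := cross_odet hy2 hy1 (by rw [odet_rot a b d]; exact hq)
      (by rw [odet_swap23 b c d]; exact neg_ne_zero.2 hs)
    rw [odet_rot a b d, odet_swap23 b c d, mul_neg, neg_lt, neg_zero] at h
    exact h
  rcases mul_neg_iff.mp e1 with ⟨h1a, h1b⟩ | ⟨h1a, h1b⟩ <;>
    rcases mul_neg_iff.mp e2 with ⟨h2a, h2b⟩ | ⟨h2a, h2b⟩ <;>
    rcases mul_pos_iff.mp e3 with ⟨h3a, h3b⟩ | ⟨h3a, h3b⟩ <;>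
    rcases mul_pos_iff.mp e4 with ⟨h4a, h4b⟩ | ⟨h4a, h4b⟩ <;>
    linarith

set_option maxHeartbeats 2000000 in
lemma perm3 {a' b' c' d' x y z w : ℝ × ℝ}
    (h : ({a', b', c', d'} : Finset (ℝ × ℝ)) = {x, y, z, w})
    (hab : a' ≠ b') (hac : a' ≠ c') (had : a' ≠ d') (hbc : b' ≠ c') (hbd : b' ≠ d')
    (hcd : c' ≠ d') (hc : X a' b' c' d') :
    (s(s(a', b'), s(c', d')) = s(s(x, y), s(z, w)) ∧ X x y z w) ∨
    (s(s(a', b'), s(c', d')) = s(s(x, z), s(y, w)) ∧ X x z y w) ∨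
    (s(s(a', b'), s(c', d')) = s(s(x, w), s(y, z)) ∧ X x w y z) := by
  have ha' : a' ∈ ({x, y, z, w} : Finset (ℝ × ℝ)) := h ▸ (by simp)
  have hb' : b' ∈ ({x, y, z, w} : Finset (ℝ × ℝ)) := h ▸ (by simp)
  have hc' : c' ∈ ({x, y, z, w} : Finset (ℝ × ℝ)) := h ▸ (by simp)
  have hd' : d' ∈ ({x, y, z, w} : Finset (ℝ × ℝ)) := h ▸ (by simp)
  simp only [Finset.mem_insert, Finset.mem_singleton] at ha' hb' hc' hd'
  clear h
  rcases ha' with rfl | rfl | rfl | rfl <;>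
    rcases hb' with rfl | rfl | rfl | rfl <;>
    rcases hc' with rfl | rfl | rfl | rfl <;>
    rcases hd' with rfl | rfl | rfl | rfl <;>
  first
  | exact (hab rfl).elim
  | exact (hac rfl).elim
  | exact (had rfl).elim
  | exact (hbc rfl).elim
  | exact (hbd rfl).elim
  | exact (hcd rfl).elim
  | exact Or.inl ⟨by simp only [Sym2.eq_iff]; try tauto, by first | exact hc | exact hc.swapL | exact hc.swapR | exact hc.swapL.swapR | exact hc.comm | exact hc.comm.swapL | exact hc.comm.swapR | exact hc.comm.swapL.swapR⟩
  | exact Or.inr (Or.inl ⟨by simp only [Sym2.eq_iff]; try tauto, by first | exact hc | exact hc.swapL | exact hc.swapR | exact hc.swapL.swapR | exact hc.comm | exact hc.comm.swapL | exact hc.comm.swapR | exact hc.comm.swapL.swapR⟩)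
  | exact Or.inr (Or.inr ⟨by simp only [Sym2.eq_iff]; try tauto, by first | exact hc | exact hc.swapL | exact hc.swapR | exact hc.swapL.swapR | exact hc.comm | exact hc.comm.swapL | exact hc.comm.swapR | exact hc.comm.swapL.swapR⟩)

lemma odet_affine3 {a b x y z w : ℝ × ℝ} {u v t : ℝ} (hsum : u + v + t = 1)
    (hw : u • x + v • y + t • z = w) :
    odet a b w = u * odet a b x + v * odet a b y + t * odet a b z := by
  obtain ⟨hx1, hx2⟩ := Prod.ext_iff.1 hw
  simp only [Prod.fst_add, Prod.snd_add, Prod.smul_fst, Prod.smul_snd, smul_eq_mul] at hx1 hx2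
  simp only [odet]
  linear_combination -(b.1 - a.1) * hx2 + (b.2 - a.2) * hx1 +
    ((b.1 - a.1) * a.2 - (b.2 - a.2) * a.1) * hsum

/-- If `w` is inside the triangle `xyz`, no pairing of `{x,y,z,w}` crosses. -/
lemma inside_not_cross {x y z w : ℝ × ℝ} {u v t : ℝ} (hu : 0 < u) (hv : 0 < v)
    (ht : 0 < t) (hsum : u + v + t = 1) (hw : u • x + v • y + t • z = w)
    (hP : odet x y z ≠ 0) :
    ¬ X x y z w ∧ ¬ X x z y w ∧ ¬ X x w y z := by
  have exyx : odet x y x = 0 := by simp only [odet]; ring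
  have exyy : odet x y y = 0 := by simp only [odet]; ring
  have exzx : odet x z x = 0 := by simp only [odet]; ring
  have exzz : odet x z z = 0 := by simp only [odet]; ring
  have eyzy : odet y z y = 0 := by simp only [odet]; ring
  have eyzz : odet y z z = 0 := by simp only [odet]; ring
  have E1 : odet x y w = t * odet x y z := by
    rw [odet_affine3 hsum hw, exyx, exyy]; ring
  have E2 : odet x z w = - (v * odet x y z) := by
    rw [odet_affine3 hsum hw, exzx, exzz, odet_swap23 x y z]; ring
  have E3 : odet y z w = u * odet x y z := by
    rw [odet_affine3 hsum hw, eyzy, eyzz, odet_rot x y z]; ring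
  refine ⟨?_, ?_, ?_⟩
  · rintro ⟨p, hp1, hp2⟩
    have := cross_odet hp1 hp2 hP (by rw [E1]; exact mul_ne_zero ht.ne' hP)
    rw [E1] at this; nlinarith [sq_nonneg (odet x y z)]
  · rintro ⟨p, hp1, hp2⟩
    have h1 : odet x z y ≠ 0 := by rw [odet_swap23 x y z]; exact neg_ne_zero.2 hP
    have h2 : odet x z w ≠ 0 := by rw [E2]; exact neg_ne_zero.2 (mul_ne_zero hv.ne' hP)
    have := cross_odet hp1 hp2 h1 h2
    rw [E2, odet_swap23 x y z] at this; nlinarith [sq_nonneg (odet x y z)]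
  · rintro hX
    obtain ⟨p, hp1, hp2⟩ := hX.comm
    have h1 : odet y z x ≠ 0 := by rw [odet_rot x y z]; exact hP
    have h2 : odet y z w ≠ 0 := by rw [E3]; exact mul_ne_zero hu.ne' hP
    have := cross_odet hp1 hp2 h1 h2
    rw [E3, odet_rot x y z] at this; nlinarith [sq_nonneg (odet x y z)]

lemma combo_ext {x y z w : ℝ × ℝ} {u v s : ℝ}
    (h1 : u * x.1 + v * y.1 + s * z.1 = w.1)
    (h2 : u * x.2 + v * y.2 + s * z.2 = w.2) : u • x + v • y + s • z = w := by
  rw [Prod.ext_iff]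
  constructor <;>
    simp only [Prod.fst_add, Prod.snd_add, Prod.smul_fst, Prod.smul_snd, smul_eq_mul] <;>
    assumption

lemma combo_comp1 {x y z w : ℝ × ℝ} {u v s : ℝ} (h : u • x + v • y + s • z = w) :
    u * x.1 + v * y.1 + s * z.1 = w.1 := by
  obtain ⟨h1, _⟩ := Prod.ext_iff.1 h
  simpa only [Prod.fst_add, Prod.smul_fst, smul_eq_mul] using h1

lemma combo_comp2 {x y z w : ℝ × ℝ} {u v s : ℝ} (h : u • x + v • y + s • z = w) :
    u * x.2 + v * y.2 + s * z.2 = w.2 := by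
  obtain ⟨_, h2⟩ := Prod.ext_iff.1 h
  simpa only [Prod.snd_add, Prod.smul_snd, smul_eq_mul] using h2

lemma two_neg_case {a b c q : ℝ × ℝ} {e1 e2 e3 : ℝ} (h1 : 0 < e1) (h2 : e2 < 0)
    (h3 : e3 < 0) (hsume : e1 + e2 + e3 = 1) (hq : e1 • a + e2 • b + e3 • c = q) :
    ∃ u v s : ℝ, 0 < u ∧ 0 < v ∧ 0 < s ∧ u + v + s = 1 ∧ u • q + v • b + s • c = a := by
  have hq1 := combo_comp1 hq
  have hq2 := combo_comp2 hq
  refine ⟨1 / e1, -e2 / e1, -e3 / e1, by positivity,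
    div_pos (neg_pos.2 h2) h1, div_pos (neg_pos.2 h3) h1, ?_, combo_ext ?_ ?_⟩
  · field_simp
    linarith
  · field_simp
    linear_combination -hq1
  · field_simp
    linear_combination -hq2

lemma one_neg_case {a b c p q : ℝ × ℝ} {α β γ e1 e2 e3 : ℝ}
    (_hα : 0 < α) (hβ : 0 < β) (hγ : 0 < γ) (hsum : α + β + γ = 1)
    (_h1 : 0 < e1) (h2 : 0 < e2) (h3 : e3 < 0) (hsume : e1 + e2 + e3 = 1)
    (hp : α • a + β • b + γ • c = p) (hq : e1 • a + e2 • b + e3 • c = q)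
    (hΔ : 0 < α * e2 - β * e1) :
    ∃ u v s : ℝ, 0 < u ∧ 0 < v ∧ 0 < s ∧ u + v + s = 1 ∧ u • q + v • a + s • c = p := by
  have hq1 := combo_comp1 hq
  have hq2 := combo_comp2 hq
  have hp1 := combo_comp1 hp
  have hp2 := combo_comp2 hp
  refine ⟨β / e2, (α * e2 - β * e1) / e2, (γ * e2 - β * e3) / e2,
    div_pos hβ h2, div_pos hΔ h2, div_pos (by nlinarith) h2, ?_, combo_ext ?_ ?_⟩
  · field_simp
    linear_combination (-β) * hsume + e2 * hsum
  · field_simp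
    linear_combination (-β) * hq1 + e2 * hp1
  · field_simp
    linear_combination (-β) * hq2 + e2 * hp2

lemma card4 {a b c d : ℝ × ℝ} (hab : a ≠ b) (hac : a ≠ c) (had : a ≠ d)
    (hbc : b ≠ c) (hbd : b ≠ d) (hcd : c ≠ d) :
    ({a, b, c, d} : Finset (ℝ × ℝ)).card = 4 := by
  rw [Finset.card_insert_of_notMem (by simp [hab, hac, had]),
    Finset.card_insert_of_notMem (by simp [hbc, hbd]),
    Finset.card_insert_of_notMem (by simp [hcd]), Finset.card_singleton]

lemma inside_card4 {x y z w : ℝ × ℝ} {u v s : ℝ} (hu : 0 < u) (hv : 0 < v)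
    (_hs : 0 < s) (hsum : u + v + s = 1) (hcombo : u • x + v • y + s • z = w)
    (hne : odet x y z ≠ 0) : ({x, y, z, w} : Finset (ℝ × ℝ)).card = 4 := by
  have hc1 := combo_comp1 hcombo
  have hc2 := combo_comp2 hcombo
  have hxy : x ≠ y := by
    rintro rfl; exact hne (by simp only [odet]; ring)
  have hxz : x ≠ z := by
    rintro rfl; exact hne (by simp only [odet]; ring)
  have hyz : y ≠ z := by
    rintro rfl; exact hne (by simp only [odet]; ring)
  have hxw : x ≠ w := by
    rintro rfl
    have E1 : v * (y.1 - x.1) = -(s * (z.1 - x.1)) := by linear_combination hc1 - x.1 * hsum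
    have E2 : v * (y.2 - x.2) = -(s * (z.2 - x.2)) := by linear_combination hc2 - x.2 * hsum
    have hmain : v * odet x y z = 0 := by
      simp only [odet]; linear_combination (z.2 - x.2) * E1 - (z.1 - x.1) * E2
    exact hne ((mul_eq_zero.1 hmain).resolve_left hv.ne')
  have hyw : y ≠ w := by
    rintro rfl
    have E1 : u * (x.1 - y.1) = -(s * (z.1 - y.1)) := by linear_combination hc1 - y.1 * hsum
    have E2 : u * (x.2 - y.2) = -(s * (z.2 - y.2)) := by linear_combination hc2 - y.2 * hsum
    have hmain : u * odet x y z = 0 := by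
      simp only [odet]; linear_combination -(z.2 - y.2) * E1 + (z.1 - y.1) * E2
    exact hne ((mul_eq_zero.1 hmain).resolve_left hu.ne')
  have hzw : z ≠ w := by
    rintro rfl
    have E1 : v * (y.1 - z.1) = -(u * (x.1 - z.1)) := by linear_combination hc1 - z.1 * hsum
    have E2 : v * (y.2 - z.2) = -(u * (x.2 - z.2)) := by linear_combination hc2 - z.2 * hsum
    have hmain : v * odet x y z = 0 := by
      simp only [odet]; linear_combination -(x.2 - z.2) * E1 + (x.1 - z.1) * E2
    exact hne ((mul_eq_zero.1 hmain).resolve_left hv.ne')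
  exact card4 hxy hxz hxw hyz hyw hzw

end Aux
lemma bad_quad {p a b c q : ℝ × ℝ} {α β γ : ℝ}
    (hα : 0 < α) (hβ : 0 < β) (hγ : 0 < γ) (hsum : α + β + γ = 1)
    (hp : α • a + β • b + γ • c = p)
    (hD : odet a b c ≠ 0) (hX1 : odet q b c ≠ 0) (hX2 : odet a q c ≠ 0)
    (hX3 : odet a b q ≠ 0)
    (hpqa : odet p q a ≠ 0) (hpqb : odet p q b ≠ 0) (hpqc : odet p q c ≠ 0) :
    ∃ x y z w : ℝ × ℝ, ({x, y, z, w} : Finset (ℝ × ℝ)) ⊆ {p, a, b, c, q} ∧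
      q ∈ ({x, y, z, w} : Finset (ℝ × ℝ)) ∧ odet x y z ≠ 0 ∧
      ∃ u v s : ℝ, 0 < u ∧ 0 < v ∧ 0 < s ∧ u + v + s = 1 ∧ u • x + v • y + s • z = w := by
  set D := odet a b c with hDdef
  set X1 := odet q b c with hX1def
  set X2 := odet a q c with hX2def
  set X3 := odet a b q with hX3def
  have hp1 := combo_comp1 hp
  have hp2 := combo_comp2 hp
  have hcr1 : X1 * a.1 + X2 * b.1 + X3 * c.1 = D * q.1 := by
    simp only [hDdef, hX1def, hX2def, hX3def, odet]; ring
  have hcr2 : X1 * a.2 + X2 * b.2 + X3 * c.2 = D * q.2 := by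
    simp only [hDdef, hX1def, hX2def, hX3def, odet]; ring
  have hF0 : X1 + X2 + X3 = D := by
    simp only [hDdef, hX1def, hX2def, hX3def, odet]; ring
  set e1 := X1 / D with he1def
  set e2 := X2 / D with he2def
  set e3 := X3 / D with he3def
  have he1 : e1 ≠ 0 := div_ne_zero hX1 hD
  have he2 : e2 ≠ 0 := div_ne_zero hX2 hD
  have he3 : e3 ≠ 0 := div_ne_zero hX3 hD
  have hsume : e1 + e2 + e3 = 1 := by
    rw [he1def, he2def, he3def]; field_simp; linear_combination hF0
  have hq : e1 • a + e2 • b + e3 • c = q := by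
    refine combo_ext ?_ ?_ <;> rw [he1def, he2def, he3def] <;> field_simp
    · linear_combination hcr1
    · linear_combination hcr2
  -- the three p-q-line determinants
  have hOc : odet p q c = D * (α * e2 - β * e1) := by
    have w1 := odet_affine3 (a := q) (b := c) hsum hp
    have r1 : odet q c a = X2 := by rw [hX2def]; simp only [odet]; ring
    have r2 : odet q c b = -X1 := by rw [hX1def]; simp only [odet]; ring
    have r3 : odet q c c = 0 := by simp only [odet]; ring
    have r4 : odet q c p = odet p q c := by simp only [odet]; ring
    rw [r1, r2, r3, r4] at w1
    rw [w1, he1def, he2def]; field_simp; ring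
  have hOa : odet p q a = D * (β * e3 - γ * e2) := by
    have w1 := odet_affine3 (a := q) (b := a) hsum hp
    have r1 : odet q a a = 0 := by simp only [odet]; ring
    have r2 : odet q a b = X3 := by rw [hX3def]; simp only [odet]; ring
    have r3 : odet q a c = -X2 := by rw [hX2def]; simp only [odet]; ring
    have r4 : odet q a p = odet p q a := by simp only [odet]; ring
    rw [r1, r2, r3, r4] at w1
    rw [w1, he2def, he3def]; field_simp; ring
  have hOb : odet p q b = D * (γ * e1 - α * e3) := by
    have w1 := odet_affine3 (a := q) (b := b) hsum hp
    have r1 : odet q b a = -X3 := by rw [hX3def]; simp only [odet]; ring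
    have r2 : odet q b b = 0 := by simp only [odet]; ring
    have r3 : odet q b c = X1 := by rw [hX1def]
    have r4 : odet q b p = odet p q b := by simp only [odet]; ring
    rw [r1, r2, r3, r4] at w1
    rw [w1, he1def, he3def]; field_simp; ring
  have hΔc : α * e2 - β * e1 ≠ 0 := fun h => hpqc (by rw [hOc, h, mul_zero])
  have hΔa : β * e3 - γ * e2 ≠ 0 := fun h => hpqa (by rw [hOa, h, mul_zero])
  have hΔb : γ * e1 - α * e3 ≠ 0 := fun h => hpqb (by rw [hOb, h, mul_zero])
  clear hOa hOb hOc hcr1 hcr2 hF0 hp1 hp2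
  have hsub : ∀ x y z w : ℝ × ℝ, x ∈ ({p, a, b, c, q} : Finset (ℝ × ℝ)) →
      y ∈ ({p, a, b, c, q} : Finset (ℝ × ℝ)) → z ∈ ({p, a, b, c, q} : Finset (ℝ × ℝ)) →
      w ∈ ({p, a, b, c, q} : Finset (ℝ × ℝ)) →
      ({x, y, z, w} : Finset (ℝ × ℝ)) ⊆ {p, a, b, c, q} := by
    intro x y z w hx hy hz hw m hm
    simp only [Finset.mem_insert, Finset.mem_singleton] at hm
    rcases hm with rfl | rfl | rfl | rfl <;> assumption
  rcases he1.lt_or_gt with h1 | h1 <;> rcases he2.lt_or_gt with h2 | h2 <;>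
    rcases he3.lt_or_gt with h3 | h3
  · -- all negative: impossible
    exact absurd hsume (by nlinarith)
  · -- e1<0, e2<0, e3>0 : c inside q a b
    obtain ⟨u, v, s, hu, hv, hs, hss, hcombo⟩ :=
      two_neg_case (q := q) (a := c) (b := a) (c := b) h3 h1 h2 (by linarith)
        (by rw [← hq]; abel)
    exact ⟨q, a, b, c, hsub _ _ _ _ (by simp) (by simp) (by simp) (by simp), by simp,
      (by rw [show odet q a b = X3 from by rw [hX3def]; simp only [odet]; ring]; exact hX3),
      u, v, s, hu, hv, hs, hss, hcombo⟩
  · -- e1<0, e2>0, e3<0 : b inside q a c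
    obtain ⟨u, v, s, hu, hv, hs, hss, hcombo⟩ :=
      two_neg_case (q := q) (a := b) (b := a) (c := c) h2 h1 h3 (by linarith)
        (by rw [← hq]; abel)
    have hne : odet q a c ≠ 0 := by
      rw [show odet q a c = -X2 from by rw [hX2def]; simp only [odet]; ring]
      exact neg_ne_zero.2 hX2
    exact ⟨q, a, c, b, hsub _ _ _ _ (by simp) (by simp) (by simp) (by simp), by simp,
      hne, u, v, s, hu, hv, hs, hss, hcombo⟩
  · -- e1<0, e2>0, e3>0 : split on Δ' = γ e2 - β e3... pairing with a
    rcases hΔa.lt_or_gt with hd | hd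
    · -- β e3 - γ e2 < 0 i.e. γ e2 - β e3 > 0: p inside (q, c, a)?? use helper map (c,b,a)
      obtain ⟨u, v, s, hu, hv, hs, hss, hcombo⟩ :=
        one_neg_case (q := q) (p := p) (a := c) (b := b) (c := a) hγ hβ hα (by linarith)
          h3 h2 h1 (by linarith) (by rw [← hp]; abel) (by rw [← hq]; abel)
          (by nlinarith)
      exact ⟨q, c, a, p, hsub _ _ _ _ (by simp) (by simp) (by simp) (by simp), by simp,
        (by rw [show odet q c a = X2 from by rw [hX2def]; simp only [odet]; ring]; exact hX2),
        u, v, s, hu, hv, hs, hss, hcombo⟩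
    · -- β e3 - γ e2 > 0: p inside (q, b, a): helper map (b,c,a)
      obtain ⟨u, v, s, hu, hv, hs, hss, hcombo⟩ :=
        one_neg_case (q := q) (p := p) (a := b) (b := c) (c := a) hβ hγ hα (by linarith)
          h2 h3 h1 (by linarith) (by rw [← hp]; abel) (by rw [← hq]; abel)
          (by nlinarith)
      have hne : odet q b a ≠ 0 := by
        rw [show odet q b a = -X3 from by rw [hX3def]; simp only [odet]; ring]
        exact neg_ne_zero.2 hX3
      exact ⟨q, b, a, p, hsub _ _ _ _ (by simp) (by simp) (by simp) (by simp), by simp,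
        hne, u, v, s, hu, hv, hs, hss, hcombo⟩
  · -- e1>0, e2<0, e3<0 : a inside q b c
    obtain ⟨u, v, s, hu, hv, hs, hss, hcombo⟩ :=
      two_neg_case h1 h2 h3 hsume hq
    exact ⟨q, b, c, a, hsub _ _ _ _ (by simp) (by simp) (by simp) (by simp), by simp,
      hX1,
      u, v, s, hu, hv, hs, hss, hcombo⟩
  · -- e1>0, e2<0, e3>0 : split on Δ'' = γ e1 - α e3, pairing with b
    rcases hΔb.lt_or_gt with hd | hd
    · -- γ e1 - α e3 < 0, i.e. α e3 - γ e1 > 0: p inside (q, a, b): helper (a,c,b)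
      obtain ⟨u, v, s, hu, hv, hs, hss, hcombo⟩ :=
        one_neg_case (q := q) (p := p) (a := a) (b := c) (c := b) hα hγ hβ (by linarith)
          h1 h3 h2 (by linarith) (by rw [← hp]; abel) (by rw [← hq]; abel)
          (by nlinarith)
      exact ⟨q, a, b, p, hsub _ _ _ _ (by simp) (by simp) (by simp) (by simp), by simp,
        (by rw [show odet q a b = X3 from by rw [hX3def]; simp only [odet]; ring]; exact hX3),
        u, v, s, hu, hv, hs, hss, hcombo⟩
    · -- γ e1 - α e3 > 0: p inside (q, c, b): helper (c,a,b)
      obtain ⟨u, v, s, hu, hv, hs, hss, hcombo⟩ :=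
        one_neg_case (q := q) (p := p) (a := c) (b := a) (c := b) hγ hα hβ (by linarith)
          h3 h1 h2 (by linarith) (by rw [← hp]; abel) (by rw [← hq]; abel)
          (by nlinarith)
      have hne : odet q c b ≠ 0 := by
        rw [show odet q c b = -X1 from by rw [hX1def]; simp only [odet]; ring]
        exact neg_ne_zero.2 hX1
      exact ⟨q, c, b, p, hsub _ _ _ _ (by simp) (by simp) (by simp) (by simp), by simp,
        hne, u, v, s, hu, hv, hs, hss, hcombo⟩
  · -- e1>0, e2>0, e3<0 : split on Δ = α e2 - β e1, pairing with c
    rcases hΔc.lt_or_gt with hd | hd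
    · -- α e2 - β e1 < 0 i.e. β e1 - α e2 > 0: p inside (q, b, c): helper (b,a,c)
      obtain ⟨u, v, s, hu, hv, hs, hss, hcombo⟩ :=
        one_neg_case (q := q) (p := p) (a := b) (b := a) (c := c) hβ hα hγ (by linarith)
          h2 h1 h3 (by linarith) (by rw [← hp]; abel) (by rw [← hq]; abel)
          (by nlinarith)
      exact ⟨q, b, c, p, hsub _ _ _ _ (by simp) (by simp) (by simp) (by simp), by simp,
        hX1,
        u, v, s, hu, hv, hs, hss, hcombo⟩
    · -- α e2 - β e1 > 0: p inside (q, a, c): helper identity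
      obtain ⟨u, v, s, hu, hv, hs, hss, hcombo⟩ :=
        one_neg_case hα hβ hγ hsum h1 h2 h3 hsume hp hq hd
      have hne : odet q a c ≠ 0 := by
        rw [show odet q a c = -X2 from by rw [hX2def]; simp only [odet]; ring]
        exact neg_ne_zero.2 hX2
      exact ⟨q, a, c, p, hsub _ _ _ _ (by simp) (by simp) (by simp) (by simp), by simp,
        hne, u, v, s, hu, hv, hs, hss, hcombo⟩
  · -- all positive: q inside a b c
    exact ⟨a, b, c, q, hsub _ _ _ _ (by simp) (by simp) (by simp) (by simp), by simp,
      hD, e1, e2, e3, h1, h2, h3, hsume, hq⟩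
lemma exists_interior (S : Finset (ℝ × ℝ)) (hgp : GenPos ↑S) (hnc : ¬ ConvexPos ↑S) :
    ∃ p a b c : ℝ × ℝ, p ∈ S ∧ a ∈ S ∧ b ∈ S ∧ c ∈ S ∧
      p ≠ a ∧ p ≠ b ∧ p ≠ c ∧ a ≠ b ∧ a ≠ c ∧ b ≠ c ∧
      ∃ α β γ : ℝ, 0 < α ∧ 0 < β ∧ 0 < γ ∧ α + β + γ = 1 ∧ α • a + β • b + γ • c = p := by
  simp only [ConvexPos, not_forall] at hnc
  obtain ⟨p, hpS, hp⟩ := hnc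
  rw [not_not] at hp
  rw [convexHull_eq_union] at hp
  simp only [Set.mem_iUnion] at hp
  obtain ⟨t, hts, hai, hpt⟩ := hp
  -- t has at most 3 elements
  have hcard3 : t.card ≤ 3 := by
    have h1 := hai.card_le_finrank_succ
    have h2 : Module.finrank ℝ (vectorSpan ℝ (Set.range (Subtype.val : ↑t → ℝ × ℝ))) ≤
        Module.finrank ℝ (ℝ × ℝ) := Submodule.finrank_le _
    have h3 : Module.finrank ℝ (ℝ × ℝ) = 2 := by simp
    simp only [Fintype.card_coe] at h1
    omega
  have hpS' : p ∈ (↑S : Set (ℝ × ℝ)) := hpS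
  have htS : ∀ q ∈ t, q ∈ S ∧ q ≠ p := by
    intro q hq
    have := hts hq
    exact ⟨this.1, fun h => this.2 (by simp [h])⟩
  rw [Finset.convexHull_eq] at hpt
  obtain ⟨w, hw0, hw1, hcm⟩ := hpt
  rw [Finset.centerMass_eq_of_sum_1 _ _ hw1] at hcm
  simp only [id] at hcm
  -- rule out small cards
  interval_cases h : t.card
  · rw [Finset.card_eq_zero] at h; subst h; simp at hw1
  · rw [Finset.card_eq_one] at h
    obtain ⟨a, rfl⟩ := h
    simp only [Finset.sum_singleton, Finset.mem_singleton, forall_eq] at hcm hw1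
    rw [hw1, one_smul] at hcm
    exact ((htS a (by simp)).2 hcm).elim
  · rw [Finset.card_eq_two] at h
    obtain ⟨a, b, hab, rfl⟩ := h
    have ha := htS a (by simp); have hb := htS b (by simp)
    rw [Finset.sum_insert (by simpa using hab), Finset.sum_singleton] at hcm
    rw [Finset.sum_insert (by simpa using hab), Finset.sum_singleton] at hw1
    exact (hgp a ha.1 b hb.1 p hpS hab ha.2 hb.2
      (odet_zero_of_segment hw1 hcm)).elim
  · rw [Finset.card_eq_three] at h
    obtain ⟨a, b, c, hab, hac, hbc, rfl⟩ := h
    have ha := htS a (by simp); have hb := htS b (by simp); have hc := htS c (by simp)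
    have hmem : a ∉ ({b, c} : Finset (ℝ × ℝ)) := by simp [hab, hac]
    have hmem2 : b ∉ ({c} : Finset (ℝ × ℝ)) := by simp [hbc]
    rw [Finset.sum_insert hmem, Finset.sum_insert hmem2, Finset.sum_singleton] at hcm
    rw [Finset.sum_insert hmem, Finset.sum_insert hmem2, Finset.sum_singleton] at hw1
    have hwa := hw0 a (by simp); have hwb := hw0 b (by simp); have hwc := hw0 c (by simp)
    have hgpab := hgp a ha.1 b hb.1 p hpS hab ha.2 hb.2
    have hgpac := hgp a ha.1 c hc.1 p hpS hac ha.2 hc.2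
    have hgpbc := hgp b hb.1 c hc.1 p hpS hbc hb.2 hc.2
    have hwc' : w c ≠ 0 := fun h0 => by
      rw [h0, zero_smul, add_zero] at hcm
      rw [h0, add_zero] at hw1
      exact hgpab (odet_zero_of_segment hw1 hcm)
    have hwb' : w b ≠ 0 := fun h0 => by
      rw [h0, zero_smul, zero_add] at hcm
      rw [h0, zero_add] at hw1
      exact hgpac (odet_zero_of_segment hw1 hcm)
    have hwa' : w a ≠ 0 := fun h0 => by
      rw [h0, zero_smul, zero_add] at hcm
      rw [h0, zero_add] at hw1
      exact hgpbc (odet_zero_of_segment hw1 hcm)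
    refine ⟨p, a, b, c, hpS, ha.1, hb.1, hc.1,
      fun h => ha.2 h.symm, fun h => hb.2 h.symm, fun h => hc.2 h.symm, hab, hac, hbc,
      w a, w b, w c, lt_of_le_of_ne hwa (Ne.symm hwa'), lt_of_le_of_ne hwb (Ne.symm hwb'),
      lt_of_le_of_ne hwc (Ne.symm hwc'), by linarith, by rw [add_assoc]; exact hcm⟩

/-- The crossing-quadruple predicate on finsets. -/
def Q (t : Finset (ℝ × ℝ)) : Prop :=
  ∃ a b c d : ℝ × ℝ, t = {a, b, c, d} ∧ a ≠ b ∧ c ≠ d ∧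
    ({a, b} : Set (ℝ × ℝ)) ∩ {c, d} = ∅ ∧ X a b c d

lemma disj_nes {a b c d : ℝ × ℝ} (h : ({a, b} : Set (ℝ × ℝ)) ∩ {c, d} = ∅) :
    a ≠ c ∧ a ≠ d ∧ b ≠ c ∧ b ≠ d := by
  have h' := Set.eq_empty_iff_forall_notMem.1 h
  refine ⟨?_, ?_, ?_, ?_⟩ <;> rintro rfl
  · exact h' a ⟨by simp, by simp⟩
  · exact h' a ⟨by simp, by simp⟩
  · exact h' b ⟨by simp, by simp⟩
  · exact h' b ⟨by simp, by simp⟩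

lemma inside_not_Q {x y z w : ℝ × ℝ} {u v s : ℝ} (hu : 0 < u) (hv : 0 < v)
    (hs : 0 < s) (hsum : u + v + s = 1) (hcombo : u • x + v • y + s • z = w)
    (hne : odet x y z ≠ 0) : ¬ Q {x, y, z, w} := by
  rintro ⟨a', b', c', d', ht, hab, hcd, hdisj, hX⟩
  obtain ⟨hac, had, hbc, hbd⟩ := disj_nes hdisj
  obtain ⟨hnc1, hnc2, hnc3⟩ := inside_not_cross hu hv hs hsum hcombo hne
  rcases perm3 ht.symm hab hac had hbc hbd hcd hX with ⟨_, h⟩ | ⟨_, h⟩ | ⟨_, h⟩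
  exacts [hnc1 h, hnc2 h, hnc3 h]

/-- The underlying 2-element finset of an unordered pair. -/
noncomputable def pairF : Sym2 (ℝ × ℝ) → Finset (ℝ × ℝ) :=
  Sym2.lift ⟨fun a b => {a, b}, fun a b => Finset.pair_comm a b⟩

/-- The underlying 4-element (or fewer) finset of an unordered pair of unordered pairs. -/
noncomputable def quadF : Sym2 (Sym2 (ℝ × ℝ)) → Finset (ℝ × ℝ) :=
  Sym2.lift ⟨fun e f => pairF e ∪ pairF f, fun e f => Finset.union_comm _ _⟩

lemma quadF_mk (a b c d : ℝ × ℝ) : quadF s(s(a, b), s(c, d)) = {a, b, c, d} := by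
  simp only [quadF, pairF, Sym2.lift_mk]
  ext m
  simp only [Finset.mem_union, Finset.mem_insert, Finset.mem_singleton]
  tauto

set_option maxHeartbeats 1000000 in
/-- Every set of 12 points in the plane in general position that is not in convex position
has at most 486 crossings. -/
theorem second_largest_crossing_number_12 (S : Finset (ℝ × ℝ)) (hcard : S.card = 12)
    (hgp : GenPos ↑S) (hnc : ¬ ConvexPos ↑S) :
    cr ↑S ≤ 486 := by
  classical
  obtain ⟨p, a, b, c, hpS, haS, hbS, hcS, hpa, hpb, hpc, hab, hac, hbc,
    α, β, γ, hα, hβ, hγ, hsum, hcomb⟩ := exists_interior S hgp hnc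
  have habc : odet a b c ≠ 0 := hgp a haS b hbS c hcS hab hac hbc
  set P := S.powersetCard 4 with hP
  set N := P.filter Q with hN
  -- Step A : cr ↑S ≤ N.card
  have hmemN : ∀ x : Sym2 (Sym2 (ℝ × ℝ)),
      (∃ a b c d : ℝ × ℝ, x = s(s(a, b), s(c, d)) ∧
        a ∈ (↑S : Set (ℝ × ℝ)) ∧ b ∈ (↑S : Set (ℝ × ℝ)) ∧ c ∈ (↑S : Set (ℝ × ℝ)) ∧
        d ∈ (↑S : Set (ℝ × ℝ)) ∧ a ≠ b ∧ c ≠ d ∧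
        ({a, b} : Set (ℝ × ℝ)) ∩ {c, d} = ∅ ∧
        (openSegment ℝ a b ∩ openSegment ℝ c d).Nonempty) → quadF x ∈ N := by
    rintro x ⟨a', b', c', d', rfl, ha, hb, hc, hd, hab', hcd', hdisj, hcross⟩
    obtain ⟨hac', had', hbc', hbd'⟩ := disj_nes hdisj
    rw [quadF_mk, hN, Finset.mem_filter]
    refine ⟨?_, a', b', c', d', rfl, hab', hcd', hdisj, hcross⟩
    rw [hP, Finset.mem_powersetCard]
    constructor
    · intro m hm
      simp only [Finset.mem_insert, Finset.mem_singleton] at hm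
      rcases hm with rfl | rfl | rfl | rfl
      exacts [ha, hb, hc, hd]
    · exact card4 hab' hac' had' hbc' hbd' hcd'
  have stepA : cr ↑S ≤ N.card := by
    unfold cr
    refine le_trans (Nat.card_le_card_of_injective
      (fun x => (⟨quadF x.1, hmemN x.1 x.2⟩ : {t // t ∈ N})) ?_)
      (le_of_eq (by rw [Nat.card_eq_fintype_card, Fintype.card_coe]))
    rintro ⟨x1, hx1⟩ ⟨x2, hx2⟩ h
    simp only [Subtype.mk.injEq] at h ⊢
    obtain ⟨a1, b1, c1, d1, rfl, ha1, hb1, hc1, hd1, hab1, hcd1, hdisj1, hcr1⟩ := hx1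
    obtain ⟨a2, b2, c2, d2, rfl, ha2, hb2, hc2, hd2, hab2, hcd2, hdisj2, hcr2⟩ := hx2
    rw [quadF_mk, quadF_mk] at h
    obtain ⟨hac1, had1, hbc1, hbd1⟩ := disj_nes hdisj1
    obtain ⟨hac2, had2, hbc2, hbd2⟩ := disj_nes hdisj2
    have e1 : odet a1 b1 c1 ≠ 0 := hgp a1 ha1 b1 hb1 c1 hc1 hab1 hac1 hbc1
    have e2 : odet a1 b1 d1 ≠ 0 := hgp a1 ha1 b1 hb1 d1 hd1 hab1 had1 hbd1
    have e3 : odet a1 c1 d1 ≠ 0 := hgp a1 ha1 c1 hc1 d1 hd1 hac1 had1 hcd1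
    have e4 : odet b1 c1 d1 ≠ 0 := hgp b1 hb1 c1 hc1 d1 hd1 hbc1 hbd1 hcd1
    rcases perm3 h.symm hab2 hac2 had2 hbc2 hbd2 hcd2 hcr2 with
      ⟨heq, _⟩ | ⟨_, hX2⟩ | ⟨_, hX2⟩
    · exact heq.symm
    · exact (excl e1 e2 e3 e4 hcr1 hX2).elim
    · refine (excl e2 e1 ?_ ?_ (X.swapR hcr1) hX2).elim
      · rw [odet_swap23 a1 c1 d1]; exact neg_ne_zero.2 e3
      · rw [odet_swap23 b1 c1 d1]; exact neg_ne_zero.2 e4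
  -- Step B : N.card ≤ 486
  have hQ0 : ¬ Q {a, b, c, p} := inside_not_Q hα hβ hγ hsum hcomb habc
  have hcard0 : ({a, b, c, p} : Finset (ℝ × ℝ)).card = 4 :=
    inside_card4 hα hβ hγ hsum hcomb habc
  have H : ∀ q : ℝ × ℝ, ∃ t : Finset (ℝ × ℝ),
      q ∈ S \ {p, a, b, c} → q ∈ t ∧ t ⊆ {p, a, b, c, q} ∧ t.card = 4 ∧ ¬ Q t := by
    intro q
    by_cases hq : q ∈ S \ ({p, a, b, c} : Finset (ℝ × ℝ))
    · rw [Finset.mem_sdiff] at hq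
      obtain ⟨hqS, hqne⟩ := hq
      simp only [Finset.mem_insert, Finset.mem_singleton] at hqne
      push_neg at hqne
      obtain ⟨hqp, hqa, hqb, hqc⟩ := hqne
      have h1 : odet q b c ≠ 0 := hgp q hqS b hbS c hcS hqb hqc hbc
      have h2 : odet a q c ≠ 0 := hgp a haS q hqS c hcS (Ne.symm hqa) hac hqc
      have h3 : odet a b q ≠ 0 := hgp a haS b hbS q hqS hab (Ne.symm hqa) (Ne.symm hqb)
      have h4 : odet p q a ≠ 0 := hgp p hpS q hqS a haS (Ne.symm hqp) hpa hqa
      have h5 : odet p q b ≠ 0 := hgp p hpS q hqS b hbS (Ne.symm hqp) hpb hqb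
      have h6 : odet p q c ≠ 0 := hgp p hpS q hqS c hcS (Ne.symm hqp) hpc hqc
      obtain ⟨x, y, z, w, hsub, hqmem, hodet, u, v, s, hu, hv, hs, hss, hcombo⟩ :=
        bad_quad hα hβ hγ hsum hcomb habc h1 h2 h3 h4 h5 h6
      exact ⟨{x, y, z, w}, fun _ => ⟨hqmem, hsub,
        inside_card4 hu hv hs hss hcombo hodet, inside_not_Q hu hv hs hss hcombo hodet⟩⟩
    · exact ⟨∅, fun h => absurd h hq⟩
  choose g hg using H
  set R := S \ ({p, a, b, c} : Finset (ℝ × ℝ)) with hR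
  set B := insert ({a, b, c, p} : Finset (ℝ × ℝ)) (R.image g) with hB
  have habcpS : ({p, a, b, c} : Finset (ℝ × ℝ)) ⊆ S := by
    intro m hm
    simp only [Finset.mem_insert, Finset.mem_singleton] at hm
    rcases hm with rfl | rfl | rfl | rfl
    exacts [hpS, haS, hbS, hcS]
  have hsubS : ∀ q ∈ R, g q ⊆ S := by
    intro q hq
    refine (hg q hq).2.1.trans ?_
    intro m hm
    simp only [Finset.mem_insert, Finset.mem_singleton] at hm
    rcases hm with rfl | rfl | rfl | rfl | rfl
    exacts [hpS, haS, hbS, hcS, (Finset.mem_sdiff.1 hq).1]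
  have hBP : B ⊆ P := by
    intro t ht
    rcases Finset.mem_insert.1 ht with rfl | ht'
    · rw [hP, Finset.mem_powersetCard]
      refine ⟨?_, hcard0⟩
      intro m hm
      simp only [Finset.mem_insert, Finset.mem_singleton] at hm
      rcases hm with rfl | rfl | rfl | rfl
      exacts [haS, hbS, hcS, hpS]
    · obtain ⟨q, hq, rfl⟩ := Finset.mem_image.1 ht'
      rw [hP, Finset.mem_powersetCard]
      exact ⟨hsubS q hq, (hg q hq).2.2.1⟩
  have hBQ : ∀ t ∈ B, ¬ Q t := by
    intro t ht
    rcases Finset.mem_insert.1 ht with rfl | ht'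
    · exact hQ0
    · obtain ⟨q, hq, rfl⟩ := Finset.mem_image.1 ht'
      exact (hg q hq).2.2.2
  have hRcard : R.card = 8 := by
    rw [hR, Finset.card_sdiff_of_subset habcpS, hcard,
      card4 hpa hpb hpc hab hac hbc]
  have hBcard : B.card = 9 := by
    rw [hB, Finset.card_insert_of_notMem, Finset.card_image_of_injOn, hRcard]
    · intro q1 h1 q2 h2 he
      have hm1 : q1 ∈ g q2 := he ▸ (hg q1 h1).1
      have hm2 := (hg q2 h2).2.1 hm1
      simp only [Finset.mem_insert, Finset.mem_singleton] at hm2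
      have h1' := Finset.mem_sdiff.1 h1
      simp only [Finset.mem_insert, Finset.mem_singleton] at h1'
      tauto
    · intro hmem
      obtain ⟨q, hq, he⟩ := Finset.mem_image.1 hmem
      have hm1 : q ∈ ({a, b, c, p} : Finset (ℝ × ℝ)) := he ▸ (hg q hq).1
      have h1' := Finset.mem_sdiff.1 hq
      simp only [Finset.mem_insert, Finset.mem_singleton] at hm1 h1'
      tauto
  have hNsub : N ⊆ P \ B := by
    intro t ht
    rw [hN, Finset.mem_filter] at ht
    rw [Finset.mem_sdiff]
    exact ⟨ht.1, fun hB' => hBQ t hB' ht.2⟩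
  have hPcard : P.card = 495 := by
    rw [hP, Finset.card_powersetCard, hcard]
    decide
  have hfinal : N.card ≤ 486 := by
    have h1 := Finset.card_le_card hNsub
    rw [Finset.card_sdiff_of_subset hBP, hBcard, hPcard] at h1
    omega
  exact le_trans stepA hfinal
end

section
/- Let T be a finite rooted tree. Perform a random root-to-leaf dive: starting at the root, at each internal node choose one of its children uniformly at random, until a leaf is reached. Then the dive reaches each leaf ℓ with probability equal to the product, over all internal nodes v on the root-to-leaf path to ℓ, of 1/d(v), and the expected value of the random variable Z = product of d(v) over all internal nodes v visited by the dive equals the number of leaves of T. (Knuth's unbiased estimator: iteratively proceeding to a random child and multiplying the encountered vertex degrees gives an unbiased estimate of the number of leaves of the tree.) -/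
/-- In a finite rooted tree given by a parent function, the children of a node `v` are the
non-root vertices whose parent is `v`. -/
def childrenOf {V : Type*} [Fintype V] [DecidableEq V] (root : V) (parent : V → V)
    (v : V) : Finset V :=
  Finset.univ.filter fun w => parent w = v ∧ w ≠ root

/-- Knuth's unbiased estimator for the number of leaves of a finite rooted tree.
The tree on vertex set `V` is given by its root, a parent function (with
`parent root = root`) and a depth function certifying acyclicity. `reach v` is the
probability that the random root-to-leaf dive (choosing a uniformly random child at each
internal node) passes through `v`; it is characterized by `reach root = 1` and
`reach w = reach v / d(v)` for every child `w` of `v`, where `d(v)` is the number of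
children of `v`. Conclusions: (i) the dive reaches each leaf `ℓ` with probability equal to
the product of `1/d(v)` over the internal nodes `v = parent^[k] ℓ`, `1 ≤ k ≤ depth ℓ`, on
the root-to-leaf path; (ii) the expected value of `Z = ∏ d(v)` over the internal nodes
visited by the dive equals the number of leaves of the tree. -/
theorem knuth_leaf_estimator_unbiased {V : Type*} [Fintype V] [DecidableEq V]
    (root : V) (parent : V → V) (depth : V → ℕ)
    (h_parent_root : parent root = root)
    (h_depth_root : depth root = 0)
    (h_depth : ∀ v, v ≠ root → depth v = depth (parent v) + 1)
    (reach : V → ℝ)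
    (h_reach_root : reach root = 1)
    (h_reach_step : ∀ v, ∀ w ∈ childrenOf root parent v,
      reach w = reach v / (childrenOf root parent v).card) :
    (∀ ℓ : V, (childrenOf root parent ℓ).card = 0 →
      reach ℓ = ∏ k ∈ Finset.Icc 1 (depth ℓ),
        (1 : ℝ) / ((childrenOf root parent (parent^[k] ℓ)).card : ℝ)) ∧
    ∑ ℓ ∈ Finset.univ.filter (fun v : V => (childrenOf root parent v).card = 0),
        reach ℓ * ∏ k ∈ Finset.Icc 1 (depth ℓ),
          ((childrenOf root parent (parent^[k] ℓ)).card : ℝ)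
      = ((Finset.univ.filter (fun v : V => (childrenOf root parent v).card = 0)).card : ℝ) := by

  -- depth of iterated parents
  have hdepth_iter : ∀ v : V, ∀ j, j ≤ depth v → depth (parent^[j] v) = depth v - j := by
    intro v j
    induction j with
    | zero => simp
    | succ j ih =>
      intro hj
      have hj' : j ≤ depth v := Nat.le_of_succ_le hj
      have h1 := ih hj'
      have hne : parent^[j] v ≠ root := by
        intro h
        rw [h, h_depth_root] at h1
        omega
      rw [Function.iterate_succ_apply']
      have := h_depth _ hne
      omega
  have hroot_depth : ∀ v : V, depth v = 0 → v = root := by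
    intro v hv
    by_contra h
    rw [h_depth v h] at hv
    omega
  -- the main formula for reach, valid at every vertex
  have main : ∀ n, ∀ v : V, depth v = n →
      reach v = ∏ k ∈ Finset.Icc 1 (depth v),
        (1 : ℝ) / ((childrenOf root parent (parent^[k] v)).card : ℝ) := by
    intro n
    induction n with
    | zero =>
      intro v hv
      have hvr := hroot_depth v hv
      rw [hv]
      simp [hvr, h_reach_root]
    | succ n ih =>
      intro v hv
      have hvr : v ≠ root := by
        intro h; rw [h, h_depth_root] at hv; omega
      have hdp : depth (parent v) = n := by
        have := h_depth v hvr; omega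
      have hmem : v ∈ childrenOf root parent (parent v) := by
        simp [childrenOf, hvr]
      rw [h_reach_step (parent v) v hmem, ih (parent v) hdp, hv, hdp]
      rw [← Finset.Ico_add_one_right_eq_Icc, ← Finset.Ico_add_one_right_eq_Icc,
        Finset.prod_Ico_eq_prod_range, Finset.prod_Ico_eq_prod_range]
      simp only [Nat.add_sub_cancel, Nat.succ_sub_one]
      rw [Finset.prod_range_succ']
      have hrw : ∀ i : ℕ,
          (1 : ℝ) / ((childrenOf root parent (parent^[1 + (i + 1)] v)).card : ℝ)
          = (1 : ℝ) / ((childrenOf root parent (parent^[1 + i] (parent v))).card : ℝ) := by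
        intro i
        have : parent^[1 + (i + 1)] v = parent^[1 + i] (parent v) := by
          rw [show 1 + (i + 1) = (1 + i) + 1 by ring, Function.iterate_succ_apply]
        rw [this]
      rw [Finset.prod_congr rfl (fun i _ => hrw i)]
      have h1 : parent^[1 + 0] v = parent v := by simp
      rw [h1, div_eq_mul_one_div]
  constructor
  · intro ℓ _
    exact main (depth ℓ) ℓ rfl
  · have hterm : ∀ ℓ ∈ Finset.univ.filter (fun v : V => (childrenOf root parent v).card = 0),
        reach ℓ * ∏ k ∈ Finset.Icc 1 (depth ℓ),
          ((childrenOf root parent (parent^[k] ℓ)).card : ℝ) = 1 := by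
      intro ℓ _
      rw [main (depth ℓ) ℓ rfl, ← Finset.prod_mul_distrib]
      apply Finset.prod_eq_one
      intro k hk
      rw [Finset.mem_Icc] at hk
      obtain ⟨m, rfl⟩ : ∃ m, k = m + 1 := ⟨k - 1, by omega⟩
      have hk1 : m ≤ depth ℓ := by omega
      have hd : depth (parent^[m] ℓ) = depth ℓ - m := hdepth_iter ℓ m hk1
      have hne : parent^[m] ℓ ≠ root := by
        intro h
        rw [h, h_depth_root] at hd
        omega
      have hmem : parent^[m] ℓ ∈ childrenOf root parent (parent^[m + 1] ℓ) := by
        have : parent^[m + 1] ℓ = parent (parent^[m] ℓ) := Function.iterate_succ_apply' _ _ _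
        simp [childrenOf, hne, this]
      have hcard : ((childrenOf root parent (parent^[m + 1] ℓ)).card : ℝ) ≠ 0 := by
        have := Finset.card_pos.mpr ⟨_, hmem⟩
        positivity
      exact one_div_mul_cancel hcard
    rw [Finset.sum_congr rfl hterm]
    simp
end

section
/- Let T be a finite rooted tree, and suppose that for each internal node v a probability distribution (p_{v,c})_{c child of v} with all p_{v,c} > 0 and Σ_c p_{v,c} = 1 is given. Perform a random root-to-leaf dive: starting at the root, at each internal node v choose child c with probability p_{v,c}, until a leaf is reached. Then the expected value of the random variable Z = inverse of the product of the probabilities of the chosen children along the dive equals the number of leaves of T. (The estimation formula accommodates any nonuniform selection: instead of the product of the degrees, one takes the inverse of the product of the probabilities of the chosen children, and the estimate remains unbiased.) -/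
/-- The nonuniform version of Knuth's unbiased estimator for the number of leaves of a
finite rooted tree. The tree on vertex set `V` is given by its root, a parent function
(with `parent root = root`) and a depth function certifying acyclicity. At each internal
node `v`, a child `c` is chosen with probability `p v c`, where all `p v c > 0` and the
probabilities of the children of `v` sum to 1. `reach v` is the probability that the
random root-to-leaf dive passes through `v`, characterized by `reach root = 1` and
`reach w = reach v * p v w` for every child `w` of `v`. Conclusion: the expected value of
`Z` = the inverse of the product of the probabilities of the chosen children along the dive
(at `parent^[k] ℓ` the chosen child is `parent^[k-1] ℓ`) equals the number of leaves. -/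
theorem knuth_leaf_estimator_nonuniform {V : Type*} [Fintype V] [DecidableEq V]
    (root : V) (parent : V → V) (depth : V → ℕ)
    (h_parent_root : parent root = root)
    (h_depth_root : depth root = 0)
    (h_depth : ∀ v, v ≠ root → depth v = depth (parent v) + 1)
    (p : V → V → ℝ)
    (h_p_pos : ∀ v, ∀ w ∈ childrenOf root parent v, 0 < p v w)
    (h_p_sum : ∀ v, (childrenOf root parent v).Nonempty →
      ∑ w ∈ childrenOf root parent v, p v w = 1)
    (reach : V → ℝ)
    (h_reach_root : reach root = 1)
    (h_reach_step : ∀ v, ∀ w ∈ childrenOf root parent v, reach w = reach v * p v w) :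
    ∑ ℓ ∈ Finset.univ.filter (fun v : V => (childrenOf root parent v).card = 0),
        reach ℓ * (∏ k ∈ Finset.Icc 1 (depth ℓ),
          p (parent^[k] ℓ) (parent^[k - 1] ℓ))⁻¹
      = ((Finset.univ.filter (fun v : V => (childrenOf root parent v).card = 0)).card : ℝ) := by
  have hdepth_iter : ∀ v, ∀ j, j ≤ depth v → depth (parent^[j] v) + j = depth v := by
    intro v j
    induction j with
    | zero => simp
    | succ j ih =>
      intro hj
      have hj' : j ≤ depth v := Nat.le_of_succ_le hj
      have h1 := ih hj'
      have hne : parent^[j] v ≠ root := by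
        intro h
        rw [h, h_depth_root] at h1
        omega
      have h2 := h_depth _ hne
      rw [Function.iterate_succ_apply']
      omega
  have hchild : ∀ v, ∀ k, 1 ≤ k → k ≤ depth v →
      parent^[k-1] v ∈ childrenOf root parent (parent^[k] v) := by
    intro v k hk hk'
    have hkk : k - 1 + 1 = k := Nat.succ_pred_eq_of_pos hk
    have h1 := hdepth_iter v (k-1) (by omega)
    have hne : parent^[k-1] v ≠ root := by
      intro h; rw [h, h_depth_root] at h1; omega
    simp only [childrenOf, Finset.mem_filter, Finset.mem_univ, true_and]
    refine ⟨?_, hne⟩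
    conv_rhs => rw [← hkk]
    rw [Function.iterate_succ_apply']
  have key : ∀ n, ∀ v, depth v = n →
      reach v = ∏ k ∈ Finset.Icc 1 (depth v), p (parent^[k] v) (parent^[k-1] v) := by
    intro n
    induction n with
    | zero =>
      intro v hv
      have hvr : v = root := by
        by_contra h
        have := h_depth v h
        omega
      subst hvr
      simp [hv, h_reach_root]
    | succ n ih =>
      intro v hv
      have hvne : v ≠ root := by
        intro h; subst h; rw [h_depth_root] at hv; omega
      have hdp : depth (parent v) = n := by
        have := h_depth v hvne; omega
      have hmem : v ∈ childrenOf root parent (parent v) := by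
        simp [childrenOf, hvne]
      have hstep := h_reach_step (parent v) v hmem
      have hprod : (∏ k ∈ Finset.Icc 1 (depth v), p (parent^[k] v) (parent^[k-1] v))
          = (∏ k ∈ Finset.Icc 1 (depth (parent v)),
              p (parent^[k] (parent v)) (parent^[k-1] (parent v))) * p (parent v) v := by
        have hconv : ∀ (m : ℕ) (f : ℕ → ℝ),
            ∏ k ∈ Finset.Icc 1 m, f k = ∏ i ∈ Finset.range m, f (i + 1) := by
          intro m f
          induction m with
          | zero => simp
          | succ m ihm =>
            rw [Finset.prod_Icc_succ_top (by omega), ihm, Finset.prod_range_succ]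
        rw [hv, hdp, hconv, hconv]
        rw [Finset.prod_range_succ']
        congr 1
      rw [hprod, ← ih (parent v) hdp, hstep, mul_comm]
  rw [Finset.sum_congr rfl (fun ℓ _ => ?_)]
  · rw [Finset.sum_const, nsmul_eq_mul, mul_one]
  · have hpos : 0 < ∏ k ∈ Finset.Icc 1 (depth ℓ), p (parent^[k] ℓ) (parent^[k-1] ℓ) := by
      apply Finset.prod_pos
      intro k hk
      rw [Finset.mem_Icc] at hk
      exact h_p_pos _ _ (hchild ℓ k hk.1 hk.2)
    rw [key (depth ℓ) ℓ rfl, mul_inv_cancel₀ (ne_of_gt hpos)]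
end

section
/- There are exactly 3 order types of 5 points: the equivalence classes of 5-element subsets S ⊆ ℝ² in general position, under the relation that S ~ T if there is a bijection σ : S → T such that for all p, q, r ∈ S the triple (σ(p), σ(q), σ(r)) has the same orientation as (p, q, r), number exactly 3. -/
namespace OrderType5

def odetZ (p q r : ℤ × ℤ) : ℤ :=
  (q.1 - p.1) * (r.2 - p.2) - (q.2 - p.2) * (r.1 - p.1)

def trip : Fin 10 → Fin 5 × Fin 5 × Fin 5
  | 0 => (0,1,2) | 1 => (0,1,3) | 2 => (0,1,4) | 3 => (0,2,3) | 4 => (0,2,4)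
  | 5 => (0,3,4) | 6 => (1,2,3) | 7 => (1,2,4) | 8 => (1,3,4) | 9 => (2,3,4)

def triOdet (p : Fin 5 → ℝ × ℝ) (k : Fin 10) : ℝ :=
  odet (p (trip k).1) (p (trip k).2.1) (p (trip k).2.2)

def triOdetZ (p : Fin 5 → ℤ × ℤ) (k : Fin 10) : ℤ :=
  odetZ (p (trip k).1) (p (trip k).2.1) (p (trip k).2.2)

/-- 10-bit vectors. -/
abbrev BVec := Bool × Bool × Bool × Bool × Bool × Bool × Bool × Bool × Bool × Bool

def bvGet (v : BVec) : Fin 10 → Bool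
  | 0 => v.1 | 1 => v.2.1 | 2 => v.2.2.1 | 3 => v.2.2.2.1 | 4 => v.2.2.2.2.1
  | 5 => v.2.2.2.2.2.1 | 6 => v.2.2.2.2.2.2.1 | 7 => v.2.2.2.2.2.2.2.1
  | 8 => v.2.2.2.2.2.2.2.2.1 | 9 => v.2.2.2.2.2.2.2.2.2

lemma bv_ext {v w : BVec} (h : ∀ k : Fin 10, bvGet v k = bvGet w k) : v = w := by
  obtain ⟨v0,v1,v2,v3,v4,v5,v6,v7,v8,v9⟩ := v
  obtain ⟨w0,w1,w2,w3,w4,w5,w6,w7,w8,w9⟩ := w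
  exact Prod.ext (h 0) (Prod.ext (h 1) (Prod.ext (h 2) (Prod.ext (h 3) (Prod.ext (h 4)
    (Prod.ext (h 5) (Prod.ext (h 6) (Prod.ext (h 7) (Prod.ext (h 8) (h 9)))))))))

def encZ (p : Fin 5 → ℤ × ℤ) : BVec :=
  (decide (0 < triOdetZ p 0), decide (0 < triOdetZ p 1), decide (0 < triOdetZ p 2),
   decide (0 < triOdetZ p 3), decide (0 < triOdetZ p 4), decide (0 < triOdetZ p 5),
   decide (0 < triOdetZ p 6), decide (0 < triOdetZ p 7), decide (0 < triOdetZ p 8),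
   decide (0 < triOdetZ p 9))

lemma bvGet_encZ (p : Fin 5 → ℤ × ℤ) : ∀ k : Fin 10, bvGet (encZ p) k = decide (0 < triOdetZ p k) := by
  intro k; fin_cases k <;> rfl

def repZ : Fin 3 → Fin 5 → ℤ × ℤ
  | 0, 0 => (0,0) | 0, 1 => (3,0) | 0, 2 => (5,2) | 0, 3 => (2,5) | 0, 4 => (-1,2)
  | 1, 0 => (0,0) | 1, 1 => (4,0) | 1, 2 => (4,4) | 1, 3 => (0,4) | 1, 4 => (1,2)
  | 2, 0 => (0,0) | 2, 1 => (8,0) | 2, 2 => (0,8) | 2, 3 => (1,1) | 2, 4 => (2,3)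

def repR (j : Fin 3) (i : Fin 5) : ℝ × ℝ := (((repZ j i).1 : ℝ), ((repZ j i).2 : ℝ))

def gp3P (x1 x2 y1 y2 z1 z2 : Bool) : Bool :=
  !((x1 == x2) && !(y1 == y2) && (z1 == z2)) && !(!(x1 == x2) && (y1 == y2) && !(z1 == z2))

def aff4P (x1 x2 x3 x4 : Bool) : Bool :=
  !(x1 && !x2 && x3 && !x4) && !(!x1 && x2 && !x3 && x4)

def gpOK (v : BVec) : Bool :=
  match v with
  | (b0,b1,b2,b3,b4,b5,b6,b7,b8,b9) =>
    gp3P b0 b5 b1 b4 b2 b3 &&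
    gp3P b0 b8 b1 b7 b2 b6 &&
    gp3P b0 b9 b3 b7 b4 b6 &&
    gp3P b1 b9 b3 b8 b5 b6 &&
    gp3P b2 b9 b4 b8 b5 b7 &&
    aff4P b6 b3 b1 b0 &&
    aff4P b7 b4 b2 b0 &&
    aff4P b8 b5 b2 b1 &&
    aff4P b9 b5 b4 b3 &&
    aff4P b9 b8 b7 b6

def goodNs : List ℕ := [0, 7, 30, 52, 193, 216, 223, 245, 387, 410, 432, 439, 584, 591, 613, 636, 778, 800, 807, 830, 971, 993, 1016, 1023, 1, 3, 4, 6, 15, 20, 22, 31, 32, 48, 60, 62, 64, 72, 79, 95, 116, 117, 129, 131, 154, 158, 180, 181, 192, 200, 209, 213, 217, 218, 221, 222, 225, 229, 247, 255, 263, 282, 286, 288, 295, 304, 391, 394, 395, 402, 403, 408, 423, 434, 435, 436, 437, 440, 449, 451, 472, 503, 504, 511, 512, 519, 520, 551, 572, 574, 583, 586, 587, 588, 589, 600, 615, 620, 621, 628, 629, 632, 719, 728, 735, 737, 741, 760, 768, 776, 794, 798, 801, 802, 805, 806, 810, 814, 823, 831, 842, 843, 865, 869, 892, 894, 906, 907,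 928, 944, 951, 959, 961, 963, 975, 991, 992, 1001, 1003, 1008, 1017, 1019, 1020, 1022, 11, 33, 56, 63, 68, 74, 75, 76, 77, 84, 85, 93, 96, 112, 119, 127, 138, 139, 145, 146, 147, 148, 149, 150, 161, 165, 188, 190, 202, 224, 231, 254, 262, 271, 274, 278, 280, 287, 289, 290, 293, 294, 306, 312, 392, 399, 421, 444, 448, 455, 456, 465, 467, 473, 487, 499, 505, 507, 508, 510, 513, 515, 516, 518, 524, 536, 550, 556, 558, 567, 568, 575, 579, 602, 624, 631, 711, 717, 729, 730, 733, 734, 736, 743, 745, 749, 752, 761, 769, 792, 799, 821, 833, 835, 858, 862, 873, 874, 875, 876, 877, 878, 884, 885, 896, 904, 911, 927, 930, 938, 939, 946, 947, 948, 949, 955, 960, 967, 990, 1012]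

def codes : List ℕ := [970, 1730, 2410, 2690, 990, 1670, 2430, 2710, 1110, 1790, 2070, 2830, 1070, 1830, 2110, 2790, 1190, 1470, 2230, 2910, 1210, 1490, 2170, 2930, 970, 198, 194, 954, 1730, 1914, 1634, 978, 2538, 2690, 1758, 2410, 1726, 1982, 1986, 242, 1102, 366, 1646, 1922, 1946, 222, 346, 1022, 990, 238, 214, 1934, 894, 1670, 1654, 898, 2558, 2710, 1778, 2430, 2542, 2702, 2566, 2882, 2886, 2826, 2678, 358, 1110, 1014, 334, 1790, 2830, 1294, 2054, 2070, 1298, 1138, 2402, 1766, 2426, 1142, 582, 586, 2382, 2386, 1826, 542, 1202, 566, 1830, 1070, 298, 294, 1054, 2638, 1178, 2014, 1334, 1358, 2110, 2790, 2642, 2582, 2586, 2902, 2766, 2926, 538, 1190, 2758, 2910, 1470, 694, 698, 1454, 414, 2134, 2230, 1478, 1346, 2022, 2146, 422, 446, 722, 2102, 1366, 2226, 482, 486, 742, 558, 1210, 2778, 2930, 1490, 714, 434, 738, 1394, 2154, 2170, 1398, 1346, 2766, 2426, 486, 1334, 222, 990, 978, 214, 238, 954, 1358, 2110, 2582, 1730,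 1202, 970, 242, 1294, 194, 898, 894, 198, 1298, 2070, 2542, 1670, 1142, 1366, 2826, 2386, 446, 2758, 2102, 2538, 2054, 2382, 2830, 1922, 2678, 2690, 1914, 2134, 2910, 1726, 2586, 2146, 566, 482, 2430, 1210, 1138, 1654, 434, 2902, 558, 1778, 1014, 1022, 1790, 422, 1190, 1178, 414, 1634, 2410, 1758, 538, 1054, 1102, 2882, 1830, 1646, 2566, 2226, 586, 2402, 2558, 2778, 2022, 2014, 2790, 1982, 2930, 2638, 2154, 2710, 1934, 1766, 2926, 1986, 346, 1070, 542, 2170, 2642, 294, 1394, 698, 694, 1398, 298, 1470, 742, 1110, 582, 2230, 2702, 334, 738, 1454, 1478, 714, 722, 1490, 358, 1826, 2886, 1946, 366]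
def goodN : Fin 264 → ℕ := fun i => goodNs.getD i.1 0
def witCode : Fin 264 → ℕ := fun i => codes.getD i.1 0

def decB (n : ℕ) : BVec :=
  (n.testBit 0, n.testBit 1, n.testBit 2, n.testBit 3, n.testBit 4,
   n.testBit 5, n.testBit 6, n.testBit 7, n.testBit 8, n.testBit 9)

def decodePerm (m : ℕ) : Fin 5 → Fin 5 := fun k => ⟨m / 5 ^ (k : ℕ) % 5, Nat.mod_lt _ (by norm_num)⟩

def witJ : Fin 264 → Fin 3 := fun i => if i.1 < 24 then 0 else if i.1 < 144 then 1 else 2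

lemma trip_distinct : ∀ k : Fin 10, (trip k).1 ≠ (trip k).2.1 ∧ (trip k).1 ≠ (trip k).2.2 ∧ (trip k).2.1 ≠ (trip k).2.2 := by decide

lemma trip_surj : ∀ a b c : Fin 5, a < b → b < c → ∃ k, trip k = (a,b,c) := by decide

lemma repZ_inj : ∀ j, Function.Injective (repZ j) := by decide

lemma repZ_gp : ∀ (j : Fin 3) (a b c : Fin 5), a ≠ b → a ≠ c → b ≠ c →
    odetZ (repZ j a) (repZ j b) (repZ j c) ≠ 0 := by decide

set_option synthInstance.maxSize 4000 in
set_option synthInstance.maxHeartbeats 2000000 in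
set_option maxRecDepth 20000 in
set_option maxHeartbeats 4000000 in
lemma witness_ok : ∀ i : Fin 264, Function.Injective (decodePerm (witCode i)) ∧
    encZ (fun a => repZ (witJ i) (decodePerm (witCode i) a)) = decB (goodN i) := by decide

set_option synthInstance.maxSize 4000 in
set_option synthInstance.maxHeartbeats 2000000 in
set_option maxRecDepth 20000 in
set_option maxHeartbeats 4000000 in
lemma classify : ∀ b0 b1 b2 b3 b4 b5 b6 b7 b8 b9 : Bool,
    gpOK (b0,b1,b2,b3,b4,b5,b6,b7,b8,b9) = true →
    ∃ i : Fin 264, (b0,b1,b2,b3,b4,b5,b6,b7,b8,b9) = decB (goodN i) := by decide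

set_option synthInstance.maxSize 4000 in
set_option synthInstance.maxHeartbeats 2000000 in
set_option maxRecDepth 20000 in
set_option maxHeartbeats 4000000 in
lemma distinguish : ∀ j j' : Fin 3, ∀ a0 a1 a2 a3 a4 : Fin 5,
    Function.Injective ![a0,a1,a2,a3,a4] →
    encZ (fun k => repZ j' (![a0,a1,a2,a3,a4] k)) = encZ (repZ j) → j = j' := by decide

/-! ### Basic odet lemmas -/

lemma odet_cyc (x y z : ℝ × ℝ) : odet x y z = odet z x y := by unfold odet; ring

lemma odet_swap23 (x y z : ℝ × ℝ) : odet x z y = - odet x y z := by unfold odet; ring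

lemma odet_swap12 (x y z : ℝ × ℝ) : odet y x z = - odet x y z := by unfold odet; ring

lemma odet_xxy (x y : ℝ × ℝ) : odet x x y = 0 := by unfold odet; ring

lemma odet_xyx (x y : ℝ × ℝ) : odet x y x = 0 := by unfold odet; ring

lemma odet_xyy (x y : ℝ × ℝ) : odet x y y = 0 := by unfold odet; ring

/-- Extend sign-agreement from sorted triples to all triples. -/
lemma sign_all {P Q : Fin 5 → ℝ × ℝ}
    (h : ∀ a b c : Fin 5, a < b → b < c →
      Real.sign (odet (Q a) (Q b) (Q c)) = Real.sign (odet (P a) (P b) (P c))) :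
    ∀ a b c : Fin 5, Real.sign (odet (Q a) (Q b) (Q c)) = Real.sign (odet (P a) (P b) (P c)) := by
  intro a b c
  rcases eq_or_ne a b with rfl | hab
  · rw [odet_xxy, odet_xxy]
  rcases eq_or_ne a c with rfl | hac
  · rw [odet_xyx, odet_xyx]
  rcases eq_or_ne b c with rfl | hbc
  · rw [odet_xyy, odet_xyy]
  rcases lt_trichotomy a b with h1 | h1 | h1
  · rcases lt_trichotomy b c with h2 | h2 | h2
    · exact h a b c h1 h2
    · exact absurd h2 hbc
    · rcases lt_trichotomy a c with h3 | h3 | h3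
      · -- a < c < b : (a,c,b) sorted
        rw [odet_swap23 (Q a) (Q c) (Q b), odet_swap23 (P a) (P c) (P b),
            Real.sign_neg, Real.sign_neg, h a c b h3 h2]
      · exact absurd h3 hac
      · -- c < a < b : (c,a,b) sorted
        rw [odet_cyc (Q a) (Q b) (Q c), odet_cyc (P a) (P b) (P c), h c a b h3 h1]
  · exact absurd h1 hab
  · rcases lt_trichotomy a c with h2 | h2 | h2
    · -- b < a < c : (b,a,c) sorted
      rw [odet_swap12 (Q b) (Q a) (Q c), odet_swap12 (P b) (P a) (P c),
          Real.sign_neg, Real.sign_neg, h b a c h1 h2]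
    · exact absurd h2 hac
    · rcases lt_trichotomy b c with h3 | h3 | h3
      · -- b < c < a : (b,c,a) sorted
        rw [odet_cyc (Q a) (Q b) (Q c), odet_cyc (Q c) (Q a) (Q b),
            odet_cyc (P a) (P b) (P c), odet_cyc (P c) (P a) (P b), h b c a h3 h2]
      · exact absurd h3 hbc
      · -- c < b < a : (c,b,a) sorted
        rw [odet_cyc (Q a) (Q b) (Q c), odet_swap23 (Q c) (Q b) (Q a),
            odet_cyc (P a) (P b) (P c), odet_swap23 (P c) (P b) (P a),
            Real.sign_neg, Real.sign_neg, h c b a h3 h1]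

/-! ### Real-side bit vectors -/

open scoped Classical in
noncomputable def bitR (p : Fin 5 → ℝ × ℝ) (k : Fin 10) : Bool :=
  if 0 < triOdet p k then true else false

lemma bitR_true {p : Fin 5 → ℝ × ℝ} {k : Fin 10} : bitR p k = true ↔ 0 < triOdet p k := by
  rw [bitR]; split_ifs with h <;> simp [h]

lemma bitR_false {p : Fin 5 → ℝ × ℝ} {k : Fin 10} (h0 : triOdet p k ≠ 0) :
    bitR p k = false ↔ triOdet p k < 0 := by
  rw [bitR]; split_ifs with h
  · simp only [Bool.true_eq_false, false_iff]; intro h'; linarith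
  · simp only [eq_self_iff_true, true_iff]
    exact lt_of_le_of_ne (not_lt.mp h) h0

noncomputable def vR (p : Fin 5 → ℝ × ℝ) : BVec :=
  (bitR p 0, bitR p 1, bitR p 2, bitR p 3, bitR p 4,
   bitR p 5, bitR p 6, bitR p 7, bitR p 8, bitR p 9)

lemma bvGet_vR (p : Fin 5 → ℝ × ℝ) : ∀ k : Fin 10, bvGet (vR p) k = bitR p k := by
  intro k; fin_cases k <;> rfl

/-! ### Sign constraints satisfied by real configurations -/

lemma gp3P_eq_true_iff (b1 b2 b3 b4 b5 b6 : Bool) : gp3P b1 b2 b3 b4 b5 b6 = true ↔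
    (¬(b1 = b2 ∧ ¬(b3 = b4) ∧ b5 = b6) ∧ ¬(¬(b1 = b2) ∧ b3 = b4 ∧ ¬(b5 = b6))) := by
  revert b1 b2 b3 b4 b5 b6; decide

lemma aff4P_eq_true_iff (b1 b2 b3 b4 : Bool) : aff4P b1 b2 b3 b4 = true ↔
    (¬(b1 = true ∧ b2 = false ∧ b3 = true ∧ b4 = false) ∧
     ¬(b1 = false ∧ b2 = true ∧ b3 = false ∧ b4 = true)) := by
  revert b1 b2 b3 b4; decide

lemma prod_sign {u v : ℝ} {bu bv : Bool} (hu : bu = true ↔ 0 < u) (hu' : bu = false ↔ u < 0)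
    (hv : bv = true ↔ 0 < v) (hv' : bv = false ↔ v < 0) :
    (bu = bv → 0 < u * v) ∧ (bu ≠ bv → u * v < 0) := by
  cases bu <;> cases bv <;> simp_all <;>
    first
      | exact mul_pos_of_neg_of_neg hu' hv'
      | exact mul_neg_of_neg_of_pos hu' hv
      | exact mul_neg_of_pos_of_neg hu hv'
      | exact mul_pos hu hv

lemma gp3P_bits (p : Fin 5 → ℝ × ℝ) (h0 : ∀ k, triOdet p k ≠ 0) (k1 k2 k3 k4 k5 k6 : Fin 10)
    (e : triOdet p k1 * triOdet p k2 - triOdet p k3 * triOdet p k4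
        + triOdet p k5 * triOdet p k6 = 0) :
    gp3P (bitR p k1) (bitR p k2) (bitR p k3) (bitR p k4) (bitR p k5) (bitR p k6) = true := by
  have pX := prod_sign (bitR_true (k := k1)) (bitR_false (h0 k1))
    (bitR_true (k := k2)) (bitR_false (h0 k2))
  have pY := prod_sign (bitR_true (k := k3)) (bitR_false (h0 k3))
    (bitR_true (k := k4)) (bitR_false (h0 k4))
  have pZ := prod_sign (bitR_true (k := k5)) (bitR_false (h0 k5))
    (bitR_true (k := k6)) (bitR_false (h0 k6))
  rw [gp3P_eq_true_iff]
  constructor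
  · rintro ⟨h12, h34, h56⟩
    have := pX.1 h12; have := pY.2 h34; have := pZ.1 h56
    linarith
  · rintro ⟨h12, h34, h56⟩
    have := pX.2 h12; have := pY.1 h34; have := pZ.2 h56
    linarith

lemma aff4P_bits (p : Fin 5 → ℝ × ℝ) (h0 : ∀ k, triOdet p k ≠ 0) (k1 k2 k3 k4 : Fin 10)
    (e : triOdet p k1 - triOdet p k2 + triOdet p k3 - triOdet p k4 = 0) :
    aff4P (bitR p k1) (bitR p k2) (bitR p k3) (bitR p k4) = true := by
  rw [aff4P_eq_true_iff]
  constructor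
  · rintro ⟨h1, h2, h3, h4⟩
    have := bitR_true.mp h1; have := (bitR_false (h0 k2)).mp h2
    have := bitR_true.mp h3; have := (bitR_false (h0 k4)).mp h4
    linarith
  · rintro ⟨h1, h2, h3, h4⟩
    have := (bitR_false (h0 k1)).mp h1; have := bitR_true.mp h2
    have := (bitR_false (h0 k3)).mp h3; have := bitR_true.mp h4
    linarith

lemma gpOK_vR (p : Fin 5 → ℝ × ℝ) (h0 : ∀ k, triOdet p k ≠ 0) : gpOK (vR p) = true := by
  have e0 : triOdet p 0 * triOdet p 5 - triOdet p 1 * triOdet p 4 + triOdet p 2 * triOdet p 3 = 0 := by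
    show odet (p 0) (p 1) (p 2) * odet (p 0) (p 3) (p 4)
      - odet (p 0) (p 1) (p 3) * odet (p 0) (p 2) (p 4)
      + odet (p 0) (p 1) (p 4) * odet (p 0) (p 2) (p 3) = 0
    unfold odet; ring
  have e1 : triOdet p 0 * triOdet p 8 - triOdet p 1 * triOdet p 7 + triOdet p 2 * triOdet p 6 = 0 := by
    show odet (p 0) (p 1) (p 2) * odet (p 1) (p 3) (p 4)
      - odet (p 0) (p 1) (p 3) * odet (p 1) (p 2) (p 4)
      + odet (p 0) (p 1) (p 4) * odet (p 1) (p 2) (p 3) = 0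
    unfold odet; ring
  have e2 : triOdet p 0 * triOdet p 9 - triOdet p 3 * triOdet p 7 + triOdet p 4 * triOdet p 6 = 0 := by
    show odet (p 0) (p 1) (p 2) * odet (p 2) (p 3) (p 4)
      - odet (p 0) (p 2) (p 3) * odet (p 1) (p 2) (p 4)
      + odet (p 0) (p 2) (p 4) * odet (p 1) (p 2) (p 3) = 0
    unfold odet; ring
  have e3 : triOdet p 1 * triOdet p 9 - triOdet p 3 * triOdet p 8 + triOdet p 5 * triOdet p 6 = 0 := by
    show odet (p 0) (p 1) (p 3) * odet (p 2) (p 3) (p 4)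
      - odet (p 0) (p 2) (p 3) * odet (p 1) (p 3) (p 4)
      + odet (p 0) (p 3) (p 4) * odet (p 1) (p 2) (p 3) = 0
    unfold odet; ring
  have e4 : triOdet p 2 * triOdet p 9 - triOdet p 4 * triOdet p 8 + triOdet p 5 * triOdet p 7 = 0 := by
    show odet (p 0) (p 1) (p 4) * odet (p 2) (p 3) (p 4)
      - odet (p 0) (p 2) (p 4) * odet (p 1) (p 3) (p 4)
      + odet (p 0) (p 3) (p 4) * odet (p 1) (p 2) (p 4) = 0
    unfold odet; ring
  have a0 : triOdet p 6 - triOdet p 3 + triOdet p 1 - triOdet p 0 = 0 := by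
    show odet (p 1) (p 2) (p 3) - odet (p 0) (p 2) (p 3)
      + odet (p 0) (p 1) (p 3) - odet (p 0) (p 1) (p 2) = 0
    unfold odet; ring
  have a1 : triOdet p 7 - triOdet p 4 + triOdet p 2 - triOdet p 0 = 0 := by
    show odet (p 1) (p 2) (p 4) - odet (p 0) (p 2) (p 4)
      + odet (p 0) (p 1) (p 4) - odet (p 0) (p 1) (p 2) = 0
    unfold odet; ring
  have a2 : triOdet p 8 - triOdet p 5 + triOdet p 2 - triOdet p 1 = 0 := by
    show odet (p 1) (p 3) (p 4) - odet (p 0) (p 3) (p 4)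
      + odet (p 0) (p 1) (p 4) - odet (p 0) (p 1) (p 3) = 0
    unfold odet; ring
  have a3 : triOdet p 9 - triOdet p 5 + triOdet p 4 - triOdet p 3 = 0 := by
    show odet (p 2) (p 3) (p 4) - odet (p 0) (p 3) (p 4)
      + odet (p 0) (p 2) (p 4) - odet (p 0) (p 2) (p 3) = 0
    unfold odet; ring
  have a4 : triOdet p 9 - triOdet p 8 + triOdet p 7 - triOdet p 6 = 0 := by
    show odet (p 2) (p 3) (p 4) - odet (p 1) (p 3) (p 4)
      + odet (p 1) (p 2) (p 4) - odet (p 1) (p 2) (p 3) = 0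
    unfold odet; ring
  show (gp3P (bitR p 0) (bitR p 5) (bitR p 1) (bitR p 4) (bitR p 2) (bitR p 3) &&
        gp3P (bitR p 0) (bitR p 8) (bitR p 1) (bitR p 7) (bitR p 2) (bitR p 6) &&
        gp3P (bitR p 0) (bitR p 9) (bitR p 3) (bitR p 7) (bitR p 4) (bitR p 6) &&
        gp3P (bitR p 1) (bitR p 9) (bitR p 3) (bitR p 8) (bitR p 5) (bitR p 6) &&
        gp3P (bitR p 2) (bitR p 9) (bitR p 4) (bitR p 8) (bitR p 5) (bitR p 7) &&
        aff4P (bitR p 6) (bitR p 3) (bitR p 1) (bitR p 0) &&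
        aff4P (bitR p 7) (bitR p 4) (bitR p 2) (bitR p 0) &&
        aff4P (bitR p 8) (bitR p 5) (bitR p 2) (bitR p 1) &&
        aff4P (bitR p 9) (bitR p 5) (bitR p 4) (bitR p 3) &&
        aff4P (bitR p 9) (bitR p 8) (bitR p 7) (bitR p 6)) = true
  simp only [Bool.and_eq_true]
  exact ⟨⟨⟨⟨⟨⟨⟨⟨⟨gp3P_bits p h0 0 5 1 4 2 3 e0, gp3P_bits p h0 0 8 1 7 2 6 e1⟩,
    gp3P_bits p h0 0 9 3 7 4 6 e2⟩, gp3P_bits p h0 1 9 3 8 5 6 e3⟩,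
    gp3P_bits p h0 2 9 4 8 5 7 e4⟩, aff4P_bits p h0 6 3 1 0 a0⟩,
    aff4P_bits p h0 7 4 2 0 a1⟩, aff4P_bits p h0 8 5 2 1 a2⟩,
    aff4P_bits p h0 9 5 4 3 a3⟩, aff4P_bits p h0 9 8 7 6 a4⟩

/-! ### Representative configurations -/

lemma odet_repR (j : Fin 3) (a b c : Fin 5) :
    odet (repR j a) (repR j b) (repR j c) = ((odetZ (repZ j a) (repZ j b) (repZ j c) : ℤ) : ℝ) := by
  unfold odet odetZ repR; push_cast; ring

lemma repR_inj (j : Fin 3) : Function.Injective (repR j) := by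
  intro a b h
  apply repZ_inj j
  have h1 := congrArg Prod.fst h
  have h2 := congrArg Prod.snd h
  simp only [repR] at h1 h2
  exact Prod.ext (by exact_mod_cast h1) (by exact_mod_cast h2)

noncomputable def TF (j : Fin 3) : Finset (ℝ × ℝ) := Finset.image (repR j) Finset.univ

lemma mem_TF {j : Fin 3} {x : ℝ × ℝ} : x ∈ TF j ↔ ∃ a, repR j a = x := by
  simp [TF]

lemma TF_card (j : Fin 3) : (TF j).card = 5 := by
  rw [TF, Finset.card_image_of_injective _ (repR_inj j), Finset.card_univ, Fintype.card_fin]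

lemma TF_gp (j : Fin 3) : GenPos ↑(TF j) := by
  intro x hx y hy z hz hxy hxz hyz
  obtain ⟨a, rfl⟩ := mem_TF.mp (Finset.mem_coe.mp hx)
  obtain ⟨b, rfl⟩ := mem_TF.mp (Finset.mem_coe.mp hy)
  obtain ⟨c, rfl⟩ := mem_TF.mp (Finset.mem_coe.mp hz)
  have hab : a ≠ b := fun h => hxy (by rw [h])
  have hac : a ≠ c := fun h => hxz (by rw [h])
  have hbc : b ≠ c := fun h => hyz (by rw [h])
  rw [odet_repR]
  exact_mod_cast repZ_gp j a b c hab hac hbc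

/-! ### The subtype and the relation -/

def Sub := {S : Finset (ℝ × ℝ) // S.card = 5 ∧ GenPos ↑S}

def Rel (S T : Sub) : Prop :=
  ∃ σ : (ℝ × ℝ) → (ℝ × ℝ), Set.BijOn σ (S.1 : Set (ℝ × ℝ)) (T.1 : Set (ℝ × ℝ)) ∧
    ∀ p ∈ S.1, ∀ q ∈ S.1, ∀ r ∈ S.1,
      Real.sign (odet (σ p) (σ q) (σ r)) = Real.sign (odet p q r)

noncomputable def TT (j : Fin 3) : Sub := ⟨TF j, TF_card j, TF_gp j⟩

lemma rel_refl (S : Sub) : Rel S S := ⟨id, Set.bijOn_id _, fun p _ q _ r _ => rfl⟩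

lemma rel_symm {S T : Sub} (h : Rel S T) : Rel T S := by
  classical
  obtain ⟨σ, hbij, hsgn⟩ := h
  set τ := Function.invFunOn σ (↑S.1 : Set (ℝ × ℝ)) with hτ
  refine ⟨τ, Set.BijOn.symm hbij.invOn_invFunOn.symm hbij, ?_⟩
  intro x hx y hy z hz
  have key : ∀ w, w ∈ T.1 → τ w ∈ S.1 ∧ σ (τ w) = w := by
    intro w hw
    have hw' : ∃ a ∈ (↑S.1 : Set (ℝ × ℝ)), σ a = w := by
      have := hbij.surjOn (Finset.mem_coe.mpr hw)
      obtain ⟨a, ha, haw⟩ := this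
      exact ⟨a, ha, haw⟩
    exact ⟨Finset.mem_coe.mp (Function.invFunOn_mem hw'), Function.invFunOn_eq hw'⟩
  obtain ⟨hx1, hx2⟩ := key x hx
  obtain ⟨hy1, hy2⟩ := key y hy
  obtain ⟨hz1, hz2⟩ := key z hz
  have := hsgn (τ x) hx1 (τ y) hy1 (τ z) hz1
  rw [hx2, hy2, hz2] at this
  exact this.symm

lemma rel_trans {S T U : Sub} (h1 : Rel S T) (h2 : Rel T U) : Rel S U := by
  obtain ⟨σ1, hbij1, hsgn1⟩ := h1
  obtain ⟨σ2, hbij2, hsgn2⟩ := h2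
  refine ⟨σ2 ∘ σ1, hbij2.comp hbij1, ?_⟩
  intro p hp q hq r hr
  have m1 : σ1 p ∈ T.1 := Finset.mem_coe.mp (hbij1.mapsTo (Finset.mem_coe.mpr hp))
  have m2 : σ1 q ∈ T.1 := Finset.mem_coe.mp (hbij1.mapsTo (Finset.mem_coe.mpr hq))
  have m3 : σ1 r ∈ T.1 := Finset.mem_coe.mp (hbij1.mapsTo (Finset.mem_coe.mpr hr))
  calc Real.sign (odet (σ2 (σ1 p)) (σ2 (σ1 q)) (σ2 (σ1 r)))
      = Real.sign (odet (σ1 p) (σ1 q) (σ1 r)) := hsgn2 _ m1 _ m2 _ m3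
    _ = Real.sign (odet p q r) := hsgn1 _ hp _ hq _ hr

/-! ### Every configuration is related to one of the three representatives -/

lemma exists_rel (S : Sub) : ∃ j : Fin 3, Rel S (TT j) := by
  classical
  obtain ⟨Sf, hcard, hgp⟩ := S
  have e : ↥Sf ≃ Fin 5 := Fintype.equivFinOfCardEq (by rw [Fintype.card_coe, hcard])
  set p : Fin 5 → ℝ × ℝ := fun i => ((e.symm i : ↥Sf) : ℝ × ℝ) with hp
  have hpmem : ∀ i, p i ∈ Sf := fun i => (e.symm i).2
  have hpinj : Function.Injective p := fun i j h =>
    e.symm.injective (Subtype.coe_injective h)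
  have hpcover : ∀ x ∈ Sf, ∃ i, p i = x := by
    intro x hx
    exact ⟨e ⟨x, hx⟩, by rw [hp]; simp⟩
  have h0 : ∀ k, triOdet p k ≠ 0 := by
    intro k
    obtain ⟨d1, d2, d3⟩ := trip_distinct k
    exact hgp _ (Finset.mem_coe.mpr (hpmem _)) _ (Finset.mem_coe.mpr (hpmem _)) _
      (Finset.mem_coe.mpr (hpmem _))
      (fun h => d1 (hpinj h)) (fun h => d2 (hpinj h)) (fun h => d3 (hpinj h))
  have hOK : gpOK (bitR p 0, bitR p 1, bitR p 2, bitR p 3, bitR p 4,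
      bitR p 5, bitR p 6, bitR p 7, bitR p 8, bitR p 9) = true := gpOK_vR p h0
  obtain ⟨i, hv⟩ := classify _ _ _ _ _ _ _ _ _ _ hOK
  obtain ⟨hinjπ, henc⟩ := witness_ok i
  set j := witJ i with hj
  set π := decodePerm (witCode i) with hπ
  set qZ : Fin 5 → ℤ × ℤ := fun a => repZ j (π a) with hqZ
  set Q : Fin 5 → ℝ × ℝ := fun a => repR j (π a) with hQ
  have hvv : vR p = encZ qZ := by rw [henc]; exact hv
  have hbit : ∀ k : Fin 10, bitR p k = decide (0 < triOdetZ qZ k) := by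
    intro k; rw [← bvGet_vR p k, hvv, bvGet_encZ]
  have hZne : ∀ k, triOdetZ qZ k ≠ 0 := by
    intro k
    obtain ⟨d1, d2, d3⟩ := trip_distinct k
    exact repZ_gp j _ _ _ (fun h => d1 (hinjπ h)) (fun h => d2 (hinjπ h)) (fun h => d3 (hinjπ h))
  have hcast : ∀ k, triOdet Q k = ((triOdetZ qZ k : ℤ) : ℝ) := fun k => odet_repR j _ _ _
  have hsign : ∀ k, Real.sign (triOdet Q k) = Real.sign (triOdet p k) := by
    intro k
    rcases hb : bitR p k with _ | _
    · have h1 : triOdet p k < 0 := (bitR_false (h0 k)).mp hb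
      have h2 : ¬(0 < triOdetZ qZ k) := by
        have h3 := hbit k; rw [hb] at h3
        exact of_decide_eq_false h3.symm
      have h3 : triOdetZ qZ k < 0 := lt_of_le_of_ne (not_lt.mp h2) (hZne k)
      rw [hcast k, Real.sign_of_neg (by exact_mod_cast h3), Real.sign_of_neg h1]
    · have h1 : 0 < triOdet p k := bitR_true.mp hb
      have h2 : 0 < triOdetZ qZ k := by
        have h3 := hbit k; rw [hb] at h3
        exact of_decide_eq_true h3.symm
      rw [hcast k, Real.sign_of_pos (by exact_mod_cast h2), Real.sign_of_pos h1]
  have hsorted : ∀ a b c : Fin 5, a < b → b < c →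
      Real.sign (odet (Q a) (Q b) (Q c)) = Real.sign (odet (p a) (p b) (p c)) := by
    intro a b c hab hbc
    obtain ⟨k, hk⟩ := trip_surj a b c hab hbc
    have hs := hsign k
    rw [triOdet, triOdet, hk] at hs
    exact hs
  have hall := sign_all hsorted
  have hQinj : Function.Injective Q := fun a b h => hinjπ (repR_inj j h)
  refine ⟨j, ?_⟩
  set σ : (ℝ × ℝ) → (ℝ × ℝ) := fun x => if h : x ∈ Sf then Q (e ⟨x, h⟩) else x with hσ
  have hσp : ∀ i : Fin 5, σ (p i) = Q i := by
    intro i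
    have hm := hpmem i
    rw [hσ]
    simp only [dif_pos hm]
    have h2 : (⟨p i, hm⟩ : ↥Sf) = e.symm i := Subtype.ext rfl
    rw [h2, Equiv.apply_symm_apply]
  refine ⟨σ, ⟨?_, ?_, ?_⟩, ?_⟩
  · intro x hx
    have hx' : x ∈ Sf := Finset.mem_coe.mp hx
    obtain ⟨a, rfl⟩ := hpcover x hx'
    rw [hσp a]
    exact Finset.mem_coe.mpr (mem_TF.mpr ⟨π a, rfl⟩)
  · intro x hx y hy hxy
    obtain ⟨a, rfl⟩ := hpcover x (Finset.mem_coe.mp hx)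
    obtain ⟨b, rfl⟩ := hpcover y (Finset.mem_coe.mp hy)
    rw [hσp a, hσp b] at hxy
    rw [hQinj hxy]
  · intro y hy
    obtain ⟨a, ha⟩ := mem_TF.mp (Finset.mem_coe.mp hy)
    obtain ⟨b, hb⟩ := (Finite.injective_iff_bijective.mp hinjπ).2 a
    refine ⟨p b, Finset.mem_coe.mpr (hpmem b), ?_⟩
    rw [hσp b, hQ]
    simp only []
    rw [hb, ha]
  · intro x hx y hy z hz
    obtain ⟨a, rfl⟩ := hpcover x hx
    obtain ⟨b, rfl⟩ := hpcover y hy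
    obtain ⟨c, rfl⟩ := hpcover z hz
    rw [hσp a, hσp b, hσp c]
    exact hall a b c

/-! ### The three representatives are pairwise unrelated -/

lemma TT_inj {j j' : Fin 3} (h : Rel (TT j) (TT j')) : j = j' := by
  classical
  obtain ⟨σ, hbij, hsgn⟩ := h
  have hmemTF : ∀ a : Fin 5, repR j a ∈ TF j := fun a => mem_TF.mpr ⟨a, rfl⟩
  have hmem : ∀ a : Fin 5, σ (repR j a) ∈ TF j' := by
    intro a
    exact Finset.mem_coe.mp (hbij.mapsTo (Finset.mem_coe.mpr (hmemTF a)))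
  choose f hf using fun a => mem_TF.mp (hmem a)
  have hfinj : Function.Injective f := by
    intro a b hab
    have h1 : σ (repR j a) = σ (repR j b) := by rw [← hf a, ← hf b, hab]
    have h2 := hbij.injOn (Finset.mem_coe.mpr (hmemTF a)) (Finset.mem_coe.mpr (hmemTF b)) h1
    exact repR_inj j h2
  have hsorted : ∀ k : Fin 10, Real.sign (triOdet (fun a => repR j' (f a)) k)
      = Real.sign (triOdet (repR j) k) := by
    intro k
    have hs := hsgn (repR j (trip k).1) (hmemTF _) (repR j (trip k).2.1) (hmemTF _)
      (repR j (trip k).2.2) (hmemTF _)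
    rw [← hf (trip k).1, ← hf (trip k).2.1, ← hf (trip k).2.2] at hs
    exact hs
  have hk : ∀ k : Fin 10, decide (0 < triOdetZ (fun a => repZ j' (f a)) k)
      = decide (0 < triOdetZ (repZ j) k) := by
    intro k
    have h1 := hsorted k
    have c1 : triOdet (fun a => repR j' (f a)) k
        = ((triOdetZ (fun a => repZ j' (f a)) k : ℤ) : ℝ) := odet_repR j' _ _ _
    have c2 : triOdet (repR j) k = ((triOdetZ (repZ j) k : ℤ) : ℝ) := odet_repR j _ _ _
    rw [c1, c2, Real.sign_intCast, Real.sign_intCast] at h1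
    have h2 : Int.sign (triOdetZ (fun a => repZ j' (f a)) k)
        = Int.sign (triOdetZ (repZ j) k) := by exact_mod_cast h1
    rw [decide_eq_decide, ← Int.sign_eq_one_iff_pos, ← Int.sign_eq_one_iff_pos, h2]
  have henc : encZ (fun a => repZ j' (f a)) = encZ (repZ j) := by
    apply bv_ext; intro k; rw [bvGet_encZ, bvGet_encZ]; exact hk k
  have hfm : ![f 0, f 1, f 2, f 3, f 4] = f := by
    funext k; fin_cases k <;> rfl
  exact distinguish j j' (f 0) (f 1) (f 2) (f 3) (f 4) (by rw [hfm]; exact hfinj)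
    (by rw [hfm]; exact henc)

end OrderType5

open OrderType5 in
/-- There are exactly 3 order types of 5 points: the 5-element subsets of `ℝ²` in general
position, modulo the relation identifying `S` and `T` when some bijection `σ : S → T`
preserves the orientation of every triple, form exactly 3 equivalence classes. -/
theorem three_order_types_of_five_points :
    Nat.card (Quot (fun S T : {S : Finset (ℝ × ℝ) // S.card = 5 ∧ GenPos ↑S} =>
      ∃ σ : (ℝ × ℝ) → (ℝ × ℝ), Set.BijOn σ (S.1 : Set (ℝ × ℝ)) (T.1 : Set (ℝ × ℝ)) ∧
        ∀ p ∈ S.1, ∀ q ∈ S.1, ∀ r ∈ S.1,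
          Real.sign (odet (σ p) (σ q) (σ r)) = Real.sign (odet p q r))) = 3 := by
  show Nat.card (Quot Rel) = 3
  have hEq : Equivalence Rel := ⟨rel_refl, fun {a b} => rel_symm, fun {a b c} => rel_trans⟩
  have hsurj : Function.Surjective (fun j => Quot.mk Rel (TT j) : Fin 3 → Quot Rel) := by
    intro x
    induction x using Quot.ind with
    | _ S =>
      obtain ⟨j, hR⟩ := exists_rel S
      exact ⟨j, (Quot.sound hR).symm⟩
  have hinj : Function.Injective (fun j => Quot.mk Rel (TT j) : Fin 3 → Quot Rel) := by
    intro j j' h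
    exact TT_inj (hEq.eqvGen_iff.mp (Quot.eq.mp h))
  have hcard := Nat.card_eq_of_bijective _ ⟨hinj, hsurj⟩
  rw [← hcard, Nat.card_eq_fintype_card, Fintype.card_fin]
end

section
/- Let S ⊆ ℝ² be a finite set in general position and let σ : S → S be a bijection such that either for all p, q, r ∈ S the triple (σ(p), σ(q), σ(r)) has the same orientation as (p, q, r), or for all p, q, r ∈ S the triple (σ(p), σ(q), σ(r)) has the opposite orientation to (p, q, r). Then σ maps every extreme point of the convex hull of S to an extreme point of the convex hull of S. (A combinatorial symmetry of a point set must preserve the set of convex hull vertices.) -/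
lemma odet_combo1 (s t u : ℝ) (h : s + t + u = 1) (a b c : ℝ × ℝ) :
    odet (s • a + t • b + u • c) b c = s * odet a b c := by
  have : u = 1 - s - t := by linarith
  subst this; simp [odet]; ring

lemma odet_combo2 (s t u : ℝ) (h : s + t + u = 1) (a b c : ℝ × ℝ) :
    odet a (s • a + t • b + u • c) c = t * odet a b c := by
  have : u = 1 - s - t := by linarith
  subst this; simp [odet]; ring

lemma odet_combo3 (s t u : ℝ) (h : s + t + u = 1) (a b c : ℝ × ℝ) :
    odet a b (s • a + t • b + u • c) = u * odet a b c := by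
  have : u = 1 - s - t := by linarith
  subst this; simp [odet]; ring

lemma bary2 (a b c x : ℝ × ℝ) :
    (odet x b c) • a + (odet a x c) • b + (odet a b x) • c = (odet a b c) • x := by
  ext <;> simp [odet] <;> ring

-- forward
lemma signs_of_mem {a b c x : ℝ × ℝ} (hab : a ≠ b) (hac : a ≠ c) (hbc : b ≠ c)
    (hα : odet x b c ≠ 0) (hβ : odet a x c ≠ 0) (hγ : odet a b x ≠ 0)
    (hx : x ∈ convexHull ℝ ({a, b, c} : Set (ℝ × ℝ))) :
    (0 < odet x b c ∧ 0 < odet a x c ∧ 0 < odet a b x) ∨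
      (odet x b c < 0 ∧ odet a x c < 0 ∧ odet a b x < 0) := by
  rw [show ({a, b, c} : Set (ℝ × ℝ)) = ↑({a, b, c} : Finset (ℝ × ℝ)) by simp] at hx
  rw [Finset.mem_convexHull] at hx
  obtain ⟨w, hw0, hw1, hwx⟩ := hx
  have hsum : w a + w b + w c = 1 := by
    rw [← hw1]
    rw [show ({a, b, c} : Finset (ℝ × ℝ)) = insert a (insert b {c}) from rfl]
    rw [Finset.sum_insert (by simp [hab, hac]), Finset.sum_insert (by simp [hbc]),
      Finset.sum_singleton]
    ring
  have hxeq : x = w a • a + w b • b + w c • c := by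
    rw [← hwx, Finset.centerMass_eq_of_sum_1 _ _ hw1]
    rw [show ({a, b, c} : Finset (ℝ × ℝ)) = insert a (insert b {c}) from rfl]
    rw [Finset.sum_insert (by simp [hab, hac]), Finset.sum_insert (by simp [hbc]),
      Finset.sum_singleton]
    simp; abel
  have e1 : odet x b c = w a * odet a b c := by rw [hxeq]; exact odet_combo1 _ _ _ hsum a b c
  have e2 : odet a x c = w b * odet a b c := by rw [hxeq]; exact odet_combo2 _ _ _ hsum a b c
  have e3 : odet a b x = w c * odet a b c := by rw [hxeq]; exact odet_combo3 _ _ _ hsum a b c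
  have ha0 : 0 < w a := lt_of_le_of_ne (hw0 a (by simp)) (fun h => hα (by rw [e1, ← h, zero_mul]))
  have hb0 : 0 < w b := lt_of_le_of_ne (hw0 b (by simp)) (fun h => hβ (by rw [e2, ← h, zero_mul]))
  have hc0 : 0 < w c := lt_of_le_of_ne (hw0 c (by simp)) (fun h => hγ (by rw [e3, ← h, zero_mul]))
  have hD : odet a b c ≠ 0 := fun h => hα (by rw [e1, h, mul_zero])
  rcases hD.lt_or_gt with h | h
  · right; refine ⟨?_, ?_, ?_⟩ <;> [rw [e1]; rw [e2]; rw [e3]] <;> exact mul_neg_of_pos_of_neg (by assumption) h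
  · left; refine ⟨?_, ?_, ?_⟩ <;> [rw [e1]; rw [e2]; rw [e3]] <;> exact mul_pos (by assumption) h


lemma bary1 (a b c x : ℝ × ℝ) :
    odet x b c + odet a x c + odet a b x = odet a b c := by simp [odet]; ring

-- backward
lemma mem_of_signs {a b c x : ℝ × ℝ}
    (h : (0 < odet x b c ∧ 0 < odet a x c ∧ 0 < odet a b x) ∨
      (odet x b c < 0 ∧ odet a x c < 0 ∧ odet a b x < 0)) :
    x ∈ convexHull ℝ ({a, b, c} : Set (ℝ × ℝ)) := by
  set α := odet x b c with hα
  set β := odet a x c with hβ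
  set γ := odet a b x with hγ
  set D := odet a b c with hD
  have hsum : α + β + γ = D := bary1 a b c x
  have hDne : D ≠ 0 := by rcases h with ⟨h1,h2,h3⟩|⟨h1,h2,h3⟩ <;> rw [← hsum] <;> [positivity; nlinarith]
  have hwa : 0 ≤ α / D ∧ 0 ≤ β / D ∧ 0 ≤ γ / D := by
    rcases h with ⟨h1,h2,h3⟩|⟨h1,h2,h3⟩
    · have : 0 < D := by rw [← hsum]; positivity
      exact ⟨by positivity, by positivity, by positivity⟩
    · have hD0 : D < 0 := by rw [← hsum]; linarith
      exact ⟨le_of_lt (div_pos_of_neg_of_neg h1 hD0), le_of_lt (div_pos_of_neg_of_neg h2 hD0),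
        le_of_lt (div_pos_of_neg_of_neg h3 hD0)⟩
  have hw1 : α / D + β / D + γ / D = 1 := by field_simp; linarith
  have key : (α / D) • a + (β / D) • b + (γ / D) • c = x := by
    have h2 := bary2 a b c x
    have : (α / D) • a + (β / D) • b + (γ / D) • c = D⁻¹ • (α • a + β • b + γ • c) := by
      rw [div_eq_inv_mul, div_eq_inv_mul, div_eq_inv_mul]; module
    rw [this, h2, smul_smul, inv_mul_cancel₀ hDne, one_smul]
  rw [← key]
  have h1 : (α/D) • a ∈ convexHull ℝ ({a,b,c} : Set (ℝ×ℝ)) → True := fun _ => trivial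
  have := Finset.centerMass_mem_convexHull (R := ℝ) (Finset.univ : Finset (Fin 3))
    (w := ![α/D, β/D, γ/D]) (z := ![a,b,c]) (s := {a,b,c})
    (by intro i _; fin_cases i <;> simp [hwa.1, hwa.2.1, hwa.2.2])
    (by rw [show ∑ i, ![α/D, β/D, γ/D] i = α/D+β/D+γ/D by simp [Fin.sum_univ_three], hw1]; norm_num)
    (by intro i _; fin_cases i <;> simp)
  rwa [Finset.centerMass_eq_of_sum_1 _ _ (by simp [Fin.sum_univ_three, hw1]),
    Fin.sum_univ_three] at this


lemma odet_seg (u v : ℝ) (h : u + v = 1) (a b : ℝ × ℝ) :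
    odet a b (u • a + v • b) = 0 := by
  have : v = 1 - u := by linarith
  subst this; simp [odet]; ring

lemma sign_cases {x : ℝ} (hx : x ≠ 0) :
    (0 < x ∧ Real.sign x = 1) ∨ (x < 0 ∧ Real.sign x = -1) := by
  rcases hx.lt_or_gt with h | h
  · exact Or.inr ⟨h, Real.sign_of_neg h⟩
  · exact Or.inl ⟨h, Real.sign_of_pos h⟩

/-- A combinatorial symmetry of a finite point set in general position (a self-bijection
that preserves the orientations of all triples, or reverses the orientations of all
triples) maps every extreme point of the convex hull of the set to an extreme point of the
convex hull of the set. -/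
theorem symmetry_preserves_extreme_points (S : Set (ℝ × ℝ)) (hfin : S.Finite)
    (hgp : GenPos S) (σ : (ℝ × ℝ) → (ℝ × ℝ)) (hbij : Set.BijOn σ S S)
    (hor : (∀ p ∈ S, ∀ q ∈ S, ∀ r ∈ S,
        Real.sign (odet (σ p) (σ q) (σ r)) = Real.sign (odet p q r)) ∨
      (∀ p ∈ S, ∀ q ∈ S, ∀ r ∈ S,
        Real.sign (odet (σ p) (σ q) (σ r)) = - Real.sign (odet p q r)))
    (p : ℝ × ℝ) (hp : p ∈ S) (hext : p ∉ convexHull ℝ (S \ {p})) :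
    σ p ∉ convexHull ℝ (S \ {σ p}) := by
  intro hmem
  set x := σ p with hxdef
  have hxS : x ∈ S := hbij.mapsTo hp
  -- uniform version of the orientation hypothesis
  obtain ⟨ε, hε, hεor⟩ : ∃ ε : ℝ, (ε = 1 ∨ ε = -1) ∧ ∀ q ∈ S, ∀ r ∈ S, ∀ s ∈ S,
      Real.sign (odet (σ q) (σ r) (σ s)) = ε * Real.sign (odet q r s) := by
    rcases hor with h | h
    · exact ⟨1, Or.inl rfl, fun q hq r hr s hs => by rw [h q hq r hr s hs, one_mul]⟩
    · exact ⟨-1, Or.inr rfl, fun q hq r hr s hs => by rw [h q hq r hr s hs]; ring⟩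
  -- Carathéodory
  rw [convexHull_eq_union] at hmem
  simp only [Set.mem_iUnion] at hmem
  obtain ⟨t, ht, hai, hxt⟩ := hmem
  have hcard : t.card ≤ 3 := by
    have h1 := hai.card_le_finrank_succ
    have h2 : Module.finrank ℝ (vectorSpan ℝ (Set.range (Subtype.val : ↑t → ℝ × ℝ))) ≤
        Module.finrank ℝ (ℝ × ℝ) := Submodule.finrank_le _
    have h3 : Module.finrank ℝ (ℝ × ℝ) = 2 := by simp
    rw [Fintype.card_coe] at h1
    omega
  have hcases : t.card = 0 ∨ t.card = 1 ∨ t.card = 2 ∨ t.card = 3 := by omega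
  rcases hcases with h | h | h | h
  · rw [Finset.card_eq_zero] at h
    subst h
    simp at hxt
  · rw [Finset.card_eq_one] at h
    obtain ⟨a, rfl⟩ := h
    simp only [Finset.coe_singleton, convexHull_singleton, Set.mem_singleton_iff] at hxt
    have : a ∈ S \ {x} := ht (by simp)
    simp [← hxt] at this
  · rw [Finset.card_eq_two] at h
    obtain ⟨a, b, hab, rfl⟩ := h
    have haS : a ∈ S \ {x} := ht (by simp)
    have hbS : b ∈ S \ {x} := ht (by simp)
    rw [show ((↑({a, b} : Finset (ℝ × ℝ))) : Set (ℝ × ℝ)) = {a, b} by simp,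
      convexHull_pair] at hxt
    obtain ⟨u, v, hu, hv, huv, hcomb⟩ := hxt
    have : odet a b x = 0 := by rw [← hcomb]; exact odet_seg u v huv a b
    exact hgp a haS.1 b hbS.1 x hxS hab (fun h => haS.2 (by simp [h])) (fun h => hbS.2 (by simp [h])) this
  · rw [Finset.card_eq_three] at h
    obtain ⟨a, b, c, hab, hac, hbc, rfl⟩ := h
    have haS : a ∈ S \ {x} := ht (by simp)
    have hbS : b ∈ S \ {x} := ht (by simp)
    have hcS : c ∈ S \ {x} := ht (by simp)
    have hax : a ≠ x := fun h => haS.2 (by simp [h])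
    have hbx : b ≠ x := fun h => hbS.2 (by simp [h])
    have hcx : c ≠ x := fun h => hcS.2 (by simp [h])
    rw [show ((↑({a, b, c} : Finset (ℝ × ℝ))) : Set (ℝ × ℝ)) = {a, b, c} by simp] at hxt
    -- nonvanishing of image-side determinants
    have hα : odet x b c ≠ 0 := hgp x hxS b hbS.1 c hcS.1 (Ne.symm hbx) (Ne.symm hcx) hbc
    have hβ : odet a x c ≠ 0 := hgp a haS.1 x hxS c hcS.1 hax hac (Ne.symm hcx)
    have hγ : odet a b x ≠ 0 := hgp a haS.1 b hbS.1 x hxS hab hax hbx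
    have himg := signs_of_mem hab hac hbc hα hβ hγ hxt
    -- preimages
    obtain ⟨a', ha'S, ha'⟩ := hbij.surjOn haS.1
    obtain ⟨b', hb'S, hb'⟩ := hbij.surjOn hbS.1
    obtain ⟨c', hc'S, hc'⟩ := hbij.surjOn hcS.1
    have hap : a' ≠ p := fun h => hax (by rw [← ha', h])
    have hbp : b' ≠ p := fun h => hbx (by rw [← hb', h])
    have hcp : c' ≠ p := fun h => hcx (by rw [← hc', h])
    have hab' : a' ≠ b' := fun h => hab (by rw [← ha', ← hb', h])
    have hac' : a' ≠ c' := fun h => hac (by rw [← ha', ← hc', h])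
    have hbc' : b' ≠ c' := fun h => hbc (by rw [← hb', ← hc', h])
    -- preimage-side determinants nonzero
    have hα' : odet p b' c' ≠ 0 := hgp p hp b' hb'S c' hc'S (Ne.symm hbp) (Ne.symm hcp) hbc'
    have hβ' : odet a' p c' ≠ 0 := hgp a' ha'S p hp c' hc'S hap hac' (Ne.symm hcp)
    have hγ' : odet a' b' p ≠ 0 := hgp a' ha'S b' hb'S p hp hab' hap hbp
    -- sign relations
    have s1 : Real.sign (odet x b c) = ε * Real.sign (odet p b' c') := by
      have := hεor p hp b' hb'S c' hc'S; rw [hb', hc', ← hxdef] at this; rw [← this]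
    have s2 : Real.sign (odet a x c) = ε * Real.sign (odet a' p c') := by
      have := hεor a' ha'S p hp c' hc'S; rw [ha', hc', ← hxdef] at this; rw [← this]
    have s3 : Real.sign (odet a b x) = ε * Real.sign (odet a' b' p) := by
      have := hεor a' ha'S b' hb'S p hp; rw [ha', hb', ← hxdef] at this; rw [← this]
    -- image-side signs all equal
    have hsigns : Real.sign (odet x b c) = Real.sign (odet a x c) ∧
        Real.sign (odet a x c) = Real.sign (odet a b x) := by
      rcases himg with ⟨h1, h2, h3⟩ | ⟨h1, h2, h3⟩
      · rw [Real.sign_of_pos h1, Real.sign_of_pos h2, Real.sign_of_pos h3]; exact ⟨rfl, rfl⟩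
      · rw [Real.sign_of_neg h1, Real.sign_of_neg h2, Real.sign_of_neg h3]; exact ⟨rfl, rfl⟩
    have hεne : ε ≠ 0 := by rcases hε with rfl | rfl <;> norm_num
    have t1 : Real.sign (odet p b' c') = Real.sign (odet a' p c') := by
      have := hsigns.1; rw [s1, s2] at this
      exact mul_left_cancel₀ hεne this
    have t2 : Real.sign (odet a' p c') = Real.sign (odet a' b' p) := by
      have := hsigns.2; rw [s2, s3] at this
      exact mul_left_cancel₀ hεne this
    -- conclude preimage-side all same strict sign
    have hpre : (0 < odet p b' c' ∧ 0 < odet a' p c' ∧ 0 < odet a' b' p) ∨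
        (odet p b' c' < 0 ∧ odet a' p c' < 0 ∧ odet a' b' p < 0) := by
      rcases sign_cases hα' with ⟨u1, v1⟩ | ⟨u1, v1⟩ <;>
      rcases sign_cases hβ' with ⟨u2, v2⟩ | ⟨u2, v2⟩ <;>
      rcases sign_cases hγ' with ⟨u3, v3⟩ | ⟨u3, v3⟩
      · exact Or.inl ⟨u1, u2, u3⟩
      · rw [v2, v3] at t2; norm_num at t2
      · rw [v1, v2] at t1; norm_num at t1
      · rw [v1, v2] at t1; norm_num at t1
      · rw [v1, v2] at t1; norm_num at t1
      · rw [v1, v2] at t1; norm_num at t1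
      · rw [v2, v3] at t2; norm_num at t2
      · exact Or.inr ⟨u1, u2, u3⟩
    have hmem' : p ∈ convexHull ℝ ({a', b', c'} : Set (ℝ × ℝ)) := mem_of_signs hpre
    apply hext
    refine convexHull_mono ?_ hmem'
    intro y hy
    rcases hy with rfl | rfl | rfl
    · exact ⟨ha'S, hap⟩
    · exact ⟨hb'S, hbp⟩
    · exact ⟨hc'S, hcp⟩
end
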